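/- arXiv:1802.04026 — 3 statements merged into one kernel-verified Lean document; each statement's English description precedes it below -/
import Mathlib

section
/- For every a ∈ H^∞ and every f ∈ H^2, the function a·f lies in the range of the co-analytic Toeplitz operator T_{\bar{a}}, i.e. aH^2 ⊆ M(\bar{a}) := T_{\bar{a}}H^2. -/
open Complex Set

noncomputable section

/-- The open unit disk in `ℂ`. -/
def unitDisk : Set ℂ := Metric.ball 0 1

/-- The `n`-th Taylor coefficient of `f` at `0`. -/
def coef (f : ℂ → ℂ) (n : ℕ) : ℂ := iteratedDeriv n f 0 / (n.factorial : ℂ)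

/-- `f` belongs to the Hardy space `H²` of the unit disk. -/
def MemH2 (f : ℂ → ℂ) : Prop :=
  DifferentiableOn ℂ f unitDisk ∧ Summable fun n => ‖coef f n‖ ^ 2

/-- The `H²` norm. -/
def norm2 (f : ℂ → ℂ) : ℝ := Real.sqrt (∑' n, ‖coef f n‖ ^ 2)

/-- The `H²` inner product. -/
def inner2 (f g : ℂ → ℂ) : ℂ := ∑' n, coef f n * (starRingEnd ℂ) (coef g n)

/-- `f` belongs to `H^∞`: bounded and analytic on the unit disk. -/
def MemHinf (f : ℂ → ℂ) : Prop :=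
  DifferentiableOn ℂ f unitDisk ∧ ∃ C, ∀ z ∈ unitDisk, ‖f z‖ ≤ C

/-- The `H^∞` (sup) norm. -/
def normInf (f : ℂ → ℂ) : ℝ := sSup ((fun z => ‖f z‖) '' unitDisk)

/-- The co-analytic Toeplitz operator `T_{\bar a}` in terms of Taylor
coefficients: the `n`-th coefficient of `T_{\bar a} f` is
`∑ₖ conj (â k) * f̂ (n + k)`. -/
def Tbar (a f : ℂ → ℂ) : ℂ → ℂ :=
  fun z => ∑' n : ℕ, (∑' k : ℕ, (starRingEnd ℂ) (coef a k) * coef f (n + k)) * z ^ n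

/-- Membership in the range space `M(ā) = T_{\bar a} H²` (as functions on the disk). -/
def MemMbar (a g : ℂ → ℂ) : Prop :=
  ∃ f, MemH2 f ∧ Set.EqOn g (Tbar a f) unitDisk

/-- The range norm on `M(ā)`: `‖T_{\bar a} f‖_{ā} = ‖f‖_{H²}`. -/
def normMbar (a g : ℂ → ℂ) : ℝ :=
  sInf {r | ∃ f, MemH2 f ∧ Set.EqOn g (Tbar a f) unitDisk ∧ r = norm2 f}

/-- `a` is outer: the analytic Toeplitz operator `T_a` (multiplication by `a`)
has dense range in `H²`. -/
def Outer (a : ℂ → ℂ) : Prop :=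
  ∀ g, MemH2 g → ∀ ε > 0, ∃ f, MemH2 f ∧ norm2 (fun z => g z - a z * f z) < ε

/-- `u` is inner: multiplication by `u` is isometric on `H²`. -/
def IsInner (u : ℂ → ℂ) : Prop :=
  MemHinf u ∧ ∀ f, MemH2 f → norm2 (fun z => u z * f z) = norm2 f

/-- `p` is (given by) a polynomial of degree `< N`, i.e. of degree at most `N - 1`. -/
def MemPoly (N : ℕ) (p : ℂ → ℂ) : Prop :=
  ∃ q : Polynomial ℂ, q.degree < (N : WithBot ℕ) ∧ ∀ z, p z = q.eval z

/-- `φ` is a multiplier from `M(ā₁)` to `M(ā₂)`. -/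
def Mult (a₁ a₂ φ : ℂ → ℂ) : Prop :=
  DifferentiableOn ℂ φ unitDisk ∧
    ∀ f, MemMbar a₁ f → MemMbar a₂ fun z => φ z * f z

/-- The backward shift `B f = (f - f 0) / z`. -/
def Bshift (f : ℂ → ℂ) : ℂ → ℂ :=
  fun z => if z = 0 then deriv f 0 else (f z - f 0) / z

namespace Stmt1

open Finset MeasureTheory Real
open scoped ENNReal

lemma hasSum_coef {f : ℂ → ℂ} (hf : DifferentiableOn ℂ f unitDisk) {z : ℂ}
    (hz : z ∈ unitDisk) : HasSum (fun n => coef f n * z ^ n) (f z) := by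
  have := Complex.hasSum_taylorSeries_on_ball (c := 0) (r := 1) hf hz
  convert this using 2 with n
  · rfl
  simp [coef, smul_eq_mul]
  ring

set_option maxHeartbeats 1000000 in
lemma summable_norm_coef_mul_pow {f : ℂ → ℂ} (hf : DifferentiableOn ℂ f unitDisk) {z : ℂ}
    (hz : z ∈ unitDisk) : Summable fun n => ‖coef f n * z ^ n‖ := by
  have hz1 : ‖z‖ < 1 := by simpa [unitDisk] using hz
  set r : ℝ := (1 + ‖z‖) / 2 with hr
  have hzr : ‖z‖ < r := by rw [hr]; linarith
  have hr1 : r < 1 := by rw [hr]; linarith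
  have hr0 : 0 < r := lt_of_le_of_lt (norm_nonneg z) hzr
  have hrd : (r : ℂ) ∈ unitDisk := by
    simp [unitDisk, Complex.norm_real, abs_of_pos hr0, hr1]
  have hs : Summable fun n => coef f n * (r : ℂ) ^ n := (hasSum_coef hf hrd).summable
  have ht : Filter.Tendsto (fun n => ‖coef f n * (r : ℂ) ^ n‖) Filter.atTop (nhds 0) := by
    simpa using hs.tendsto_atTop_zero.norm
  obtain ⟨M, hM⟩ := ht.bddAbove_range
  have hM' : ∀ n, ‖coef f n‖ * r ^ n ≤ M := by
    intro n
    have := hM ⟨n, rfl⟩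
    simpa [norm_mul, norm_pow, Complex.norm_real, abs_of_pos hr0] using this
  refine Summable.of_nonneg_of_le (fun n => norm_nonneg _)
    (f := fun n => M * (‖z‖ / r) ^ n) (fun n => ?_) ?_
  · 
    rw [norm_mul, norm_pow]
    have h1 : ‖coef f n‖ * ‖z‖ ^ n = (‖coef f n‖ * r ^ n) * (‖z‖ / r) ^ n := by
      field_simp
      rw [mul_assoc, ← mul_pow]
      congr 2
      field_simp
    rw [h1]
    apply mul_le_mul_of_nonneg_right (hM' n)
    positivity
  · apply Summable.mul_left
    apply summable_geometric_of_lt_one (by positivity)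
    rw [div_lt_one hr0]; exact hzr

/-- coefficient of the product (Cauchy product). -/
def cp (a f : ℂ → ℂ) (n : ℕ) : ℂ := ∑ j ∈ range (n + 1), coef a j * coef f (n - j)

lemma mul_eq_tsum_cp {a f : ℂ → ℂ} (ha : DifferentiableOn ℂ a unitDisk)
    (hf : DifferentiableOn ℂ f unitDisk) {z : ℂ} (hz : z ∈ unitDisk) :
    a z * f z = ∑' n, cp a f n * z ^ n := by
  have h1 := (hasSum_coef ha hz).tsum_eq
  have h2 := (hasSum_coef hf hz).tsum_eq
  rw [← h1, ← h2]
  rw [tsum_mul_tsum_eq_tsum_sum_antidiagonal_of_summable_norm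
    (summable_norm_coef_mul_pow ha hz) (summable_norm_coef_mul_pow hf hz)]
  congr 1
  funext n
  rw [Finset.Nat.sum_antidiagonal_eq_sum_range_succ (f := fun i j => (coef a i * z ^ i) * (coef f j * z ^ j))]
  rw [cp, Finset.sum_mul]
  apply Finset.sum_congr rfl
  intro j hj
  have hjn : j ≤ n := Nat.lt_succ_iff.mp (Finset.mem_range.mp hj)
  have hzz : z ^ j * z ^ (n - j) = z ^ n := by
    rw [← pow_add, Nat.add_sub_cancel' hjn]
  linear_combination (coef a j * coef f (n - j)) * hzz

/-- Realize an ℓ² sequence as an H² function. -/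
lemma exists_H2_fun (γ : ℕ → ℂ) (hγ : Summable fun n => ‖γ n‖ ^ 2) :
    ∃ g : ℂ → ℂ, MemH2 g ∧ ∀ n, coef g n = γ n := by
  classical
  set p := FormalMultilinearSeries.ofScalars ℂ γ with hp
  have hbdd : ∀ n, ‖γ n‖ ≤ Real.sqrt (∑' n, ‖γ n‖ ^ 2) := by
    intro n
    have h1 : ‖γ n‖ ^ 2 ≤ ∑' n, ‖γ n‖ ^ 2 := hγ.le_tsum n (fun m _ => by positivity)
    have := Real.sqrt_le_sqrt h1
    rwa [Real.sqrt_sq (norm_nonneg _)] at this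
  have hrad : 1 ≤ p.radius := by
    have := p.le_radius_of_bound (Real.sqrt (∑' n, ‖γ n‖ ^ 2)) (r := 1) ?_
    · simpa using this
    · intro n
      simp only [NNReal.coe_one, one_pow, mul_one]
      calc ‖p n‖ = ‖γ n‖ := by rw [hp, FormalMultilinearSeries.ofScalars_norm]
      _ ≤ _ := hbdd n
  have hball : HasFPowerSeriesOnBall p.sum p 0 1 :=
    (p.hasFPowerSeriesOnBall (lt_of_lt_of_le one_pos hrad)).mono one_pos hrad
  have hdisk : unitDisk = Metric.eball (0 : ℂ) 1 := by
    have h := Metric.emetric_ball_nnreal (x := (0:ℂ)) (ε := 1)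
    rw [unitDisk]
    simpa using h.symm
  refine ⟨p.sum, ⟨?_, ?_⟩, ?_⟩
  · rw [hdisk]; exact hball.differentiableOn
  · have hc : ∀ n, coef p.sum n = γ n := by
      intro n
      have h := hball.factorial_smul 1 n
      rw [← iteratedDeriv_eq_iteratedFDeriv] at h
      have h2 : (p n) (fun _ => (1 : ℂ)) = γ n := by
        rw [hp, FormalMultilinearSeries.ofScalars_apply_eq]; simp
      rw [h2] at h
      rw [coef, ← h]
      simp [nsmul_eq_mul]
      rw [mul_comm, mul_div_assoc, div_self (by exact_mod_cast Nat.factorial_ne_zero n), mul_one]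
    exact hγ.congr fun n => by rw [hc n]
  · intro n
    have h := hball.factorial_smul 1 n
    rw [← iteratedDeriv_eq_iteratedFDeriv] at h
    have h2 : (p n) (fun _ => (1 : ℂ)) = γ n := by
      rw [hp, FormalMultilinearSeries.ofScalars_apply_eq]; simp
    rw [h2] at h
    rw [coef, ← h]
    simp [nsmul_eq_mul]
    rw [mul_comm, mul_div_assoc, div_self (by exact_mod_cast Nat.factorial_ne_zero n), mul_one]


/-- Extension of a sequence to `ℤ` by zero. -/
def extz (c : ℕ → ℂ) : ℤ → ℂ := fun m => Int.casesOn m (fun n => c n) (fun _ => 0)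

@[simp] lemma extz_ofNat (c : ℕ → ℂ) (n : ℕ) : extz c (n : ℤ) = c n := rfl

lemma extz_neg (c : ℕ → ℂ) {m : ℤ} (h : m < 0) : extz c m = 0 := by
  cases m with
  | ofNat n => exact absurd h (Int.natCast_nonneg n : (0:ℤ) ≤ n).not_gt
  | negSucc n => rfl

variable {α : ℕ → ℂ}

lemma summable_sq_extz (hα2 : Summable fun n => ‖α n‖ ^ 2) :
    Summable fun m : ℤ => ‖extz α m‖ ^ 2 := by
  apply Summable.of_nat_of_neg
  · exact hα2.congr fun n => by rw [extz_ofNat]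
  · apply summable_of_ne_finset_zero (s := {0})
    intro n hn
    have hn0 : n ≠ 0 := by simpa using hn
    have : (-(n:ℤ)) < 0 := by
      simp only [Left.neg_neg_iff]
      exact_mod_cast Nat.pos_of_ne_zero hn0
    rw [extz_neg α this]
    simp

lemma summable_sq_extz_shift (hα2 : Summable fun n => ‖α n‖ ^ 2) (t : ℤ) :
    Summable fun m : ℤ => ‖extz α (m - t)‖ ^ 2 :=
  ((Equiv.subRight t).summable_iff (f := fun j : ℤ => ‖extz α j‖ ^ 2)).mpr
    (summable_sq_extz hα2)

lemma summable_sq_extz_shift' (hα2 : Summable fun n => ‖α n‖ ^ 2) (t : ℤ) :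
    Summable fun m : ℤ => ‖extz α (t - m)‖ ^ 2 :=
  ((Equiv.subLeft t).summable_iff (f := fun j : ℤ => ‖extz α j‖ ^ 2)).mpr
    (summable_sq_extz hα2)

lemma summable_shift_mul' (hα2 : Summable fun n => ‖α n‖ ^ 2) (t s : ℤ) :
    Summable fun m : ℤ => ‖extz α (t - m)‖ * ‖extz α (s - m)‖ := by
  refine Summable.of_nonneg_of_le (fun m => by positivity)
    (f := fun m => (‖extz α (t - m)‖ ^ 2 + ‖extz α (s - m)‖ ^ 2) / 2) (fun m => ?_) ?_
  · nlinarith [sq_nonneg (‖extz α (t - m)‖ - ‖extz α (s - m)‖)]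
  · exact ((summable_sq_extz_shift' hα2 t).add (summable_sq_extz_shift' hα2 s)).div_const 2

lemma summable_shift_mul_conj' (hα2 : Summable fun n => ‖α n‖ ^ 2) (t s : ℤ) :
    Summable fun m : ℤ => (starRingEnd ℂ) (extz α (t - m)) * extz α (s - m) := by
  apply Summable.of_norm
  refine (summable_shift_mul' hα2 t s).congr fun m => ?_
  rw [norm_mul, RCLike.norm_conj]

lemma summable_shift_mul (hα2 : Summable fun n => ‖α n‖ ^ 2) (t s : ℤ) :
    Summable fun m : ℤ => ‖extz α (m - t)‖ * ‖extz α (m - s)‖ := by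
  refine Summable.of_nonneg_of_le (fun m => by positivity)
    (f := fun m => (‖extz α (m - t)‖ ^ 2 + ‖extz α (m - s)‖ ^ 2) / 2) (fun m => ?_) ?_
  · nlinarith [sq_nonneg (‖extz α (m - t)‖ - ‖extz α (m - s)‖)]
  · exact ((summable_sq_extz_shift hα2 t).add (summable_sq_extz_shift hα2 s)).div_const 2

lemma summable_shift_mul_conj (hα2 : Summable fun n => ‖α n‖ ^ 2) (t s : ℤ) :
    Summable fun m : ℤ => extz α (m - t) * (starRingEnd ℂ) (extz α (m - s)) := by
  apply Summable.of_norm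
  refine (summable_shift_mul hα2 t s).congr fun m => ?_
  rw [norm_mul, RCLike.norm_conj]

/-- Autocorrelation of the coefficient sequence. -/
def Bcor (α : ℕ → ℂ) (d : ℤ) : ℂ := ∑' j : ℤ, extz α j * (starRingEnd ℂ) (extz α (j + d))

lemma tsum_shift (t s : ℤ) :
    ∑' m : ℤ, extz α (m - t) * (starRingEnd ℂ) (extz α (m - s)) = Bcor α (t - s) := by
  rw [Bcor]
  rw [← Equiv.tsum_eq (Equiv.addRight t)
    (fun m => extz α (m - t) * (starRingEnd ℂ) (extz α (m - s)))]
  apply tsum_congr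
  intro j
  simp only [Equiv.coe_addRight]
  rw [show j + t - t = j by ring, show j + t - s = j + (t - s) by ring]

lemma tsum_shift' (t s : ℤ) :
    ∑' m : ℤ, (starRingEnd ℂ) (extz α (t - m)) * extz α (s - m) = Bcor α (t - s) := by
  rw [Bcor]
  rw [← Equiv.tsum_eq (Equiv.subLeft s)
    (fun m => (starRingEnd ℂ) (extz α (t - m)) * extz α (s - m))]
  apply tsum_congr
  intro j
  simp only [Equiv.subLeft_apply]
  rw [show t - (s - j) = j + (t - s) by ring, show s - (s - j) = j by ring]
  ring

lemma norm_sq_sum {ι : Type*} (s : Finset ι) (x : ι → ℂ) :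
    ‖∑ t ∈ s, x t‖ ^ 2 = ∑ p ∈ s ×ˢ s, (x p.1 * (starRingEnd ℂ) (x p.2)).re := by
  have h2 : (‖∑ t ∈ s, x t‖ ^ 2 : ℝ)
      = ((∑ t ∈ s, x t) * (starRingEnd ℂ) (∑ t ∈ s, x t)).re := by
    rw [Complex.mul_conj, Complex.ofReal_re, Complex.normSq_eq_norm_sq]
  rw [h2, map_sum, Finset.sum_mul_sum]
  rw [Complex.re_sum]
  rw [Finset.sum_product]
  simp [Complex.re_sum]

variable (α) in
/-- `T_a u` as a bilateral sequence: convolution. -/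
def Pz (v : ℕ →₀ ℂ) (m : ℤ) : ℂ := ∑ t ∈ v.support, v t * extz α (m - (t : ℤ))

variable (α) in
/-- `T_ā u` as a bilateral sequence: correlation. -/
def Qz (v : ℕ →₀ ℂ) (m : ℤ) : ℂ := ∑ t ∈ v.support, v t * (starRingEnd ℂ) (extz α ((t : ℤ) - m))

lemma Pz_neg (v : ℕ →₀ ℂ) {m : ℤ} (h : m < 0) : Pz α v m = 0 := by
  apply Finset.sum_eq_zero
  intro t _
  rw [extz_neg α (by omega : m - (t:ℤ) < 0), mul_zero]

section key

variable (hα2 : Summable fun n => ‖α n‖ ^ 2) (v : ℕ →₀ ℂ)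

include hα2

lemma summable_sq_Pz : Summable fun m : ℤ => ‖Pz α v m‖ ^ 2 := by
  have : ∀ m : ℤ, ‖Pz α v m‖ ^ 2 = ∑ p ∈ v.support ×ˢ v.support,
      ((v p.1 * extz α (m - (p.1:ℤ))) *
        (starRingEnd ℂ) (v p.2 * extz α (m - (p.2:ℤ)))).re := by
    intro m
    exact norm_sq_sum v.support fun t => v t * extz α (m - (t:ℤ))
  refine (summable_sum (s := v.support ×ˢ v.support) fun p _ => ?_).congr
    fun m => (this m).symm
  apply Summable.of_norm_bounded
    (g := fun m : ℤ => (‖v p.1‖ * ‖v p.2‖) * (‖extz α (m - (p.1:ℤ))‖ * ‖extz α (m - (p.2:ℤ))‖))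
    (((summable_shift_mul hα2 p.1 p.2)).mul_left _)
  intro m
  calc ‖((v p.1 * extz α (m - (p.1:ℤ))) * (starRingEnd ℂ) (v p.2 * extz α (m - (p.2:ℤ)))).re‖
      ≤ ‖(v p.1 * extz α (m - (p.1:ℤ))) * (starRingEnd ℂ) (v p.2 * extz α (m - (p.2:ℤ)))‖ := by
        rw [Real.norm_eq_abs]
        exact Complex.abs_re_le_norm _
    _ = ‖v p.1‖ * ‖v p.2‖ * (‖extz α (m - (p.1:ℤ))‖ * ‖extz α (m - (p.2:ℤ))‖) := by
        rw [norm_mul, RCLike.norm_conj, norm_mul, norm_mul]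
        ring

lemma summable_sq_Qz : Summable fun m : ℤ => ‖Qz α v m‖ ^ 2 := by
  have : ∀ m : ℤ, ‖Qz α v m‖ ^ 2 = ∑ p ∈ v.support ×ˢ v.support,
      ((v p.1 * (starRingEnd ℂ) (extz α ((p.1:ℤ) - m))) *
        (starRingEnd ℂ) (v p.2 * (starRingEnd ℂ) (extz α ((p.2:ℤ) - m)))).re := by
    intro m
    exact norm_sq_sum v.support fun t => v t * (starRingEnd ℂ) (extz α ((t:ℤ) - m))
  refine (summable_sum (s := v.support ×ˢ v.support) fun p _ => ?_).congr
    fun m => (this m).symm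
  apply Summable.of_norm_bounded
    (g := fun m : ℤ => (‖v p.1‖ * ‖v p.2‖) * (‖extz α ((p.1:ℤ) - m)‖ * ‖extz α ((p.2:ℤ) - m)‖))
    ((summable_shift_mul' hα2 p.1 p.2).mul_left _)
  intro m
  calc ‖((v p.1 * (starRingEnd ℂ) (extz α ((p.1:ℤ) - m))) *
        (starRingEnd ℂ) (v p.2 * (starRingEnd ℂ) (extz α ((p.2:ℤ) - m)))).re‖
      ≤ ‖(v p.1 * (starRingEnd ℂ) (extz α ((p.1:ℤ) - m))) *
        (starRingEnd ℂ) (v p.2 * (starRingEnd ℂ) (extz α ((p.2:ℤ) - m)))‖ := by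
        rw [Real.norm_eq_abs]
        exact Complex.abs_re_le_norm _
    _ = ‖v p.1‖ * ‖v p.2‖ * (‖extz α ((p.1:ℤ) - m)‖ * ‖extz α ((p.2:ℤ) - m)‖) := by
        rw [norm_mul, RCLike.norm_conj, norm_mul, norm_mul, RCLike.norm_conj, RCLike.norm_conj]
        ring

lemma tsum_sq_Pz : ∑' m : ℤ, ‖Pz α v m‖ ^ 2
    = ∑ p ∈ v.support ×ˢ v.support,
        (v p.1 * (starRingEnd ℂ) (v p.2) * Bcor α ((p.1:ℤ) - (p.2:ℤ))).re := by
  simp only [Pz]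
  rw [tsum_congr (fun m : ℤ =>
    norm_sq_sum (x := fun t => v t * extz α (m - (t:ℤ))) v.support)]
  rw [Summable.tsum_finsetSum (s := v.support ×ˢ v.support) ?hsum]
  case hsum =>
    intro p _
    apply Summable.of_norm_bounded
      (g := fun m : ℤ => (‖v p.1‖ * ‖v p.2‖) * (‖extz α (m - (p.1:ℤ))‖ * ‖extz α (m - (p.2:ℤ))‖))
      ((summable_shift_mul hα2 p.1 p.2).mul_left _)
    intro m
    calc ‖((v p.1 * extz α (m - (p.1:ℤ))) * (starRingEnd ℂ) (v p.2 * extz α (m - (p.2:ℤ)))).re‖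
        ≤ ‖(v p.1 * extz α (m - (p.1:ℤ))) * (starRingEnd ℂ) (v p.2 * extz α (m - (p.2:ℤ)))‖ := by
          rw [Real.norm_eq_abs]
          exact Complex.abs_re_le_norm _
      _ = ‖v p.1‖ * ‖v p.2‖ * (‖extz α (m - (p.1:ℤ))‖ * ‖extz α (m - (p.2:ℤ))‖) := by
          rw [norm_mul, RCLike.norm_conj, norm_mul, norm_mul]
          ring
  apply Finset.sum_congr rfl
  intro p _
  have hre : ∀ m : ℤ, ((v p.1 * extz α (m - (p.1:ℤ))) *
      (starRingEnd ℂ) (v p.2 * extz α (m - (p.2:ℤ)))).re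
      = ((v p.1 * (starRingEnd ℂ) (v p.2)) *
        (extz α (m - (p.1:ℤ)) * (starRingEnd ℂ) (extz α (m - (p.2:ℤ))))).re := by
    intro m
    congr 1
    rw [map_mul]
    ring
  rw [tsum_congr hre]
  rw [← Complex.re_tsum ((summable_shift_mul_conj hα2 p.1 p.2).mul_left _)]
  rw [tsum_mul_left, tsum_shift]

lemma tsum_sq_Qz : ∑' m : ℤ, ‖Qz α v m‖ ^ 2
    = ∑ p ∈ v.support ×ˢ v.support,
        (v p.1 * (starRingEnd ℂ) (v p.2) * Bcor α ((p.1:ℤ) - (p.2:ℤ))).re := by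
  simp only [Qz]
  rw [tsum_congr (fun m : ℤ =>
    norm_sq_sum (x := fun t => v t * (starRingEnd ℂ) (extz α ((t:ℤ) - m))) v.support)]
  rw [Summable.tsum_finsetSum (s := v.support ×ˢ v.support) ?hsum]
  case hsum =>
    intro p _
    apply Summable.of_norm_bounded
      (g := fun m : ℤ => (‖v p.1‖ * ‖v p.2‖) * (‖extz α ((p.1:ℤ) - m)‖ * ‖extz α ((p.2:ℤ) - m)‖))
      ((summable_shift_mul' hα2 p.1 p.2).mul_left _)
    intro m
    calc ‖((v p.1 * (starRingEnd ℂ) (extz α ((p.1:ℤ) - m))) *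
          (starRingEnd ℂ) (v p.2 * (starRingEnd ℂ) (extz α ((p.2:ℤ) - m)))).re‖
        ≤ ‖(v p.1 * (starRingEnd ℂ) (extz α ((p.1:ℤ) - m))) *
          (starRingEnd ℂ) (v p.2 * (starRingEnd ℂ) (extz α ((p.2:ℤ) - m)))‖ := by
          rw [Real.norm_eq_abs]
          exact Complex.abs_re_le_norm _
      _ = ‖v p.1‖ * ‖v p.2‖ * (‖extz α ((p.1:ℤ) - m)‖ * ‖extz α ((p.2:ℤ) - m)‖) := by
          rw [norm_mul, RCLike.norm_conj, norm_mul, norm_mul, RCLike.norm_conj, RCLike.norm_conj]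
          ring
  apply Finset.sum_congr rfl
  intro p _
  have hre : ∀ m : ℤ, ((v p.1 * (starRingEnd ℂ) (extz α ((p.1:ℤ) - m))) *
      (starRingEnd ℂ) (v p.2 * (starRingEnd ℂ) (extz α ((p.2:ℤ) - m)))).re
      = ((v p.1 * (starRingEnd ℂ) (v p.2)) *
        ((starRingEnd ℂ) (extz α ((p.1:ℤ) - m)) * extz α ((p.2:ℤ) - m))).re := by
    intro m
    congr 1
    rw [map_mul, Complex.conj_conj]
    ring
  rw [tsum_congr hre]
  rw [← Complex.re_tsum ((summable_shift_mul_conj' hα2 p.1 p.2).mul_left _)]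
  rw [tsum_mul_left, tsum_shift']

set_option maxHeartbeats 1000000 in
/-- The key inequality: `‖T_ā u‖ ≤ ‖T_a u‖` at the level of square sums. -/
lemma key_ineq :
    (Summable fun n : ℕ => ‖Qz α v (n:ℤ)‖ ^ 2) ∧ (Summable fun n : ℕ => ‖Pz α v (n:ℤ)‖ ^ 2) ∧
    ∑' n : ℕ, ‖Qz α v (n:ℤ)‖ ^ 2 ≤ ∑' n : ℕ, ‖Pz α v (n:ℤ)‖ ^ 2 := by
  have hinj : Function.Injective (fun n : ℕ => (n : ℤ)) := fun x y h => by simpa using h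
  have hQN : Summable fun n : ℕ => ‖Qz α v (n:ℤ)‖ ^ 2 :=
    (summable_sq_Qz hα2 v).comp_injective hinj
  have hPN : Summable fun n : ℕ => ‖Pz α v (n:ℤ)‖ ^ 2 :=
    (summable_sq_Pz hα2 v).comp_injective hinj
  refine ⟨hQN, hPN, ?_⟩
  have h1 : ∑' n : ℕ, ‖Qz α v (n:ℤ)‖ ^ 2 ≤ ∑' m : ℤ, ‖Qz α v m‖ ^ 2 := by
    apply Summable.tsum_le_tsum_of_inj (fun n : ℕ => (n : ℤ)) hinj
      (fun c _ => by positivity) (fun n => le_refl _) hQN (summable_sq_Qz hα2 v)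
  have h2 : ∑' m : ℤ, ‖Pz α v m‖ ^ 2 = ∑' n : ℕ, ‖Pz α v (n:ℤ)‖ ^ 2 := by
    symm
    refine Function.Injective.tsum_eq (f := fun m : ℤ => ‖Pz α v m‖ ^ 2) hinj ?_
    intro m hm
    by_contra hne
    apply hm
    have hm0 : m < 0 := by
      by_contra hge
      push_neg at hge
      exact hne ⟨m.toNat, by simp [Int.toNat_of_nonneg hge]⟩
    simp [Pz_neg v hm0]
  calc ∑' n : ℕ, ‖Qz α v (n:ℤ)‖ ^ 2 ≤ ∑' m : ℤ, ‖Qz α v m‖ ^ 2 := h1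
    _ = ∑' m : ℤ, ‖Pz α v m‖ ^ 2 := by rw [tsum_sq_Qz hα2 v, tsum_sq_Pz hα2 v]
    _ = ∑' n : ℕ, ‖Pz α v (n:ℤ)‖ ^ 2 := h2

end key


lemma exp_int_integral (j k : ℕ) :
    (∫ θ in Ioc (0:ℝ) (2*π), Complex.exp (((j:ℂ) - (k:ℂ)) * θ * I)) =
      if j = k then ((2*π : ℝ) : ℂ) else 0 := by
  have h2π : (0:ℝ) ≤ 2*π := by positivity
  rw [← intervalIntegral.integral_of_le h2π]
  by_cases hjk : j = k
  · subst hjk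
    simp
  · rw [if_neg hjk]
    have hc : ((j:ℂ) - (k:ℂ)) * I ≠ 0 := by
      apply mul_ne_zero _ I_ne_zero
      intro h
      apply hjk
      have : (j:ℂ) = (k:ℂ) := by linear_combination h
      exact_mod_cast this
    have heq : ∀ θ : ℝ, Complex.exp (((j:ℂ) - (k:ℂ)) * θ * I)
        = Complex.exp ((((j:ℂ) - (k:ℂ)) * I) * θ) := by
      intro θ; ring_nf
    rw [intervalIntegral.integral_congr (g := fun θ : ℝ => Complex.exp ((((j:ℂ) - (k:ℂ)) * I) * θ))
      (fun θ _ => heq θ)]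
    rw [integral_exp_mul_complex hc]
    have h1 : Complex.exp (((j:ℂ) - (k:ℂ)) * I * (2*π:ℝ)) = 1 := by
      have := Complex.exp_int_mul_two_pi_mul_I ((j:ℤ) - (k:ℤ))
      convert this using 2
      push_cast
      ring
    have h0 : Complex.exp (((j:ℂ) - (k:ℂ)) * I * (0:ℝ)) = 1 := by
      simp
    rw [h1, h0]
    simp

lemma summable_coef_mul_pow_real {f : ℂ → ℂ} (hf : DifferentiableOn ℂ f unitDisk) {r : ℝ}
    (hr0 : 0 < r) (hr1 : r < 1) : Summable fun n => ‖coef f n‖ * r ^ n := by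
  have hrd : ((r : ℝ) : ℂ) ∈ unitDisk := by
    simp only [unitDisk, Metric.mem_ball, dist_zero_right, Complex.norm_real, Real.norm_eq_abs]
    rw [abs_of_pos hr0]
    exact hr1
  refine (summable_norm_coef_mul_pow hf hrd).congr fun n => ?_
  rw [norm_mul, norm_pow, Complex.norm_real, Real.norm_eq_abs, abs_of_pos hr0]

lemma parseval_le {a : ℂ → ℂ} (hda : DifferentiableOn ℂ a unitDisk) {C : ℝ}
    (hC : ∀ z ∈ unitDisk, ‖a z‖ ≤ C) {r : ℝ} (hr0 : 0 < r) (hr1 : r < 1) :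
    ∑' j, (‖coef a j‖ * r ^ j) ^ 2 ≤ C ^ 2 := by
  set w : ℝ → ℂ := fun θ => (r : ℂ) * Complex.exp (θ * I) with hw
  have hwnorm : ∀ θ : ℝ, ‖w θ‖ = r := by
    intro θ
    rw [hw]
    simp [norm_mul, Complex.norm_exp_ofReal_mul_I,
      Complex.norm_real, abs_of_pos hr0]
  have hwd : ∀ θ : ℝ, w θ ∈ unitDisk := by
    intro θ; simp only [unitDisk, Metric.mem_ball, dist_zero_right]; rw [hwnorm θ]; exact hr1
  have hrd : (r : ℂ) ∈ unitDisk := by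
    simp [unitDisk, Complex.norm_real, abs_of_pos hr0, hr1]
  set s : ℕ → ℝ := fun j => ‖coef a j‖ * r ^ j with hsdef
  have hs : Summable s := summable_coef_mul_pow_real hda hr0 hr1
  have hsnn : ∀ j, 0 ≤ s j := fun j => by positivity
  -- terms
  set g : ℕ × ℕ → ℝ → ℂ := fun p θ =>
    (coef a p.1 * w θ ^ p.1) * (starRingEnd ℂ) (coef a p.2 * w θ ^ p.2) with hg
  have hgnorm : ∀ p θ, ‖g p θ‖ = s p.1 * s p.2 := by
    intro p θ
    rw [hg]
    rw [norm_mul, RCLike.norm_conj, norm_mul, norm_mul, norm_pow, norm_pow, hwnorm θ]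
  have hwcont : Continuous w := by
    apply continuous_const.mul
    exact Complex.continuous_exp.comp (Complex.continuous_ofReal.mul continuous_const)
  have hgcont : ∀ p : ℕ × ℕ, Continuous (g p) := by
    intro p
    apply Continuous.mul
    · exact continuous_const.mul ((hwcont.pow p.1))
    · exact Complex.continuous_conj.comp (continuous_const.mul (hwcont.pow p.2))
  have hμfin : MeasureTheory.volume (Ioc (0:ℝ) (2*π)) ≠ ⊤ := by
    simp [Real.volume_Ioc, ENNReal.mul_eq_top]
  have hgint : ∀ p : ℕ × ℕ, Integrable (g p) (volume.restrict (Ioc (0:ℝ) (2*π))) := by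
    intro p
    exact (hgcont p).integrableOn_Ioc
  -- the pointwise expansion
  have hpt : ∀ θ : ℝ, a (w θ) * (starRingEnd ℂ) (a (w θ)) = ∑' p : ℕ × ℕ, g p θ := by
    intro θ
    have h1 : a (w θ) = ∑' n, coef a n * w θ ^ n := (hasSum_coef hda (hwd θ)).tsum_eq.symm
    rw [h1, Complex.conj_tsum]
    rw [tsum_mul_tsum_of_summable_norm (summable_norm_coef_mul_pow hda (hwd θ))
      (by simpa using summable_norm_coef_mul_pow hda (hwd θ))]
  -- split g into constant * exponential
  have hexp : ∀ (jj kk : ℕ) (θ : ℝ), Complex.exp (θ * I) ^ jj *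
      ((starRingEnd ℂ) (Complex.exp (θ * I))) ^ kk
      = Complex.exp (((jj:ℂ) - (kk:ℂ)) * θ * I) := by
    intro jj kk θ
    rw [← Complex.exp_conj, ← Complex.exp_nat_mul, ← Complex.exp_nat_mul, ← Complex.exp_add]
    congr 1
    have : (starRingEnd ℂ) ((θ : ℂ) * I) = -((θ:ℂ) * I) := by
      rw [map_mul, Complex.conj_I, Complex.conj_ofReal]
      ring
    rw [this]
    ring
  have hgsplit : ∀ (p : ℕ × ℕ) (θ : ℝ), g p θ =
      (coef a p.1 * (starRingEnd ℂ) (coef a p.2) * (r:ℂ) ^ (p.1 + p.2)) *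
        Complex.exp (((p.1:ℂ) - (p.2:ℂ)) * θ * I) := by
    intro p θ
    rw [hg]
    simp only [hw]
    rw [map_mul, map_pow, map_mul, Complex.conj_ofReal]
    rw [mul_pow, mul_pow, ← hexp p.1 p.2 θ]
    ring
  -- integral of each term
  have hint : ∀ p : ℕ × ℕ, (∫ θ in Ioc (0:ℝ) (2*π), g p θ) =
      (coef a p.1 * (starRingEnd ℂ) (coef a p.2) * (r:ℂ) ^ (p.1 + p.2)) *
        (if p.1 = p.2 then ((2*π : ℝ) : ℂ) else 0) := by
    intro p
    rw [show (fun θ : ℝ => g p θ) = fun θ : ℝ =>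
      (coef a p.1 * (starRingEnd ℂ) (coef a p.2) * (r:ℂ) ^ (p.1 + p.2)) *
        Complex.exp (((p.1:ℂ) - (p.2:ℂ)) * θ * I) from funext fun θ => hgsplit p θ]
    rw [MeasureTheory.integral_const_mul, exp_int_integral]
  -- summability of integrals of norms
  have hnormint : ∀ p : ℕ × ℕ, (∫ θ in Ioc (0:ℝ) (2*π), ‖g p θ‖) = (2*π) * (s p.1 * s p.2) := by
    intro p
    rw [show (fun θ : ℝ => ‖g p θ‖) = fun _ : ℝ => s p.1 * s p.2 from funext fun θ => hgnorm p θ]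
    rw [MeasureTheory.setIntegral_const]
    simp [Real.volume_Ioc, ENNReal.toReal_ofReal (by positivity : (0:ℝ) ≤ 2*π), Real.pi_pos.le]
  have hsummul : Summable fun p : ℕ × ℕ => s p.1 * s p.2 := hs.mul_of_nonneg hs hsnn hsnn
  have hsumint : Summable fun p : ℕ × ℕ => ∫ θ in Ioc (0:ℝ) (2*π), ‖g p θ‖ := by
    rw [show (fun p : ℕ × ℕ => ∫ θ in Ioc (0:ℝ) (2*π), ‖g p θ‖)
      = fun p : ℕ × ℕ => (2*π) * (s p.1 * s p.2) from funext hnormint]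
    exact hsummul.mul_left _
  -- swap integral and sum
  have hswap : (∫ θ in Ioc (0:ℝ) (2*π), a (w θ) * (starRingEnd ℂ) (a (w θ)))
      = ∑' p : ℕ × ℕ, ∫ θ in Ioc (0:ℝ) (2*π), g p θ := by
    rw [show (fun θ : ℝ => a (w θ) * (starRingEnd ℂ) (a (w θ)))
      = fun θ : ℝ => ∑' p : ℕ × ℕ, g p θ from funext hpt]
    exact (MeasureTheory.integral_tsum_of_summable_integral_norm hgint hsumint).symm
  -- compute diagonal sum
  have hK : ∀ j, s j ≤ ∑' i, s i := fun j => hs.le_tsum j fun m _ => hsnn m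
  have hs2 : Summable fun j => (s j) ^ 2 := by
    refine Summable.of_nonneg_of_le (fun j => by positivity)
      (f := fun j => (∑' i, s i) * s j) (fun j => ?_) (hs.mul_left _)
    rw [pow_two]
    exact mul_le_mul_of_nonneg_right (hK j) (hsnn j)
  have hdiagterm : ∀ j : ℕ,
      (coef a j * (starRingEnd ℂ) (coef a j) * (r:ℂ) ^ (j + j)) *
        (if j = j then ((2*π : ℝ) : ℂ) else 0) = (((s j) ^ 2 * (2*π) : ℝ) : ℂ) := by
    intro j
    rw [if_pos rfl, Complex.mul_conj, Complex.normSq_eq_norm_sq]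
    simp only [hsdef]
    push_cast
    ring
  have hdiag : (∑' p : ℕ × ℕ, ∫ θ in Ioc (0:ℝ) (2*π), g p θ)
      = (((∑' j, (s j) ^ 2) * (2*π) : ℝ) : ℂ) := by
    have h0 : Function.support (fun p : ℕ × ℕ => ∫ θ in Ioc (0:ℝ) (2*π), g p θ) ⊆
        Set.range (fun j : ℕ => ((j, j) : ℕ × ℕ)) := by
      intro p hp
      by_contra hnr
      apply hp
      show (∫ θ in Ioc (0:ℝ) (2*π), g p θ) = 0
      rw [hint p]
      have hne : p.1 ≠ p.2 := fun h => hnr ⟨p.1, Prod.ext rfl h⟩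
      rw [if_neg hne, mul_zero]
    have hinj : Function.Injective (fun j : ℕ => ((j, j) : ℕ × ℕ)) := by
      intro x y h
      simpa using congrArg Prod.fst h
    rw [← Function.Injective.tsum_eq hinj h0]
    have hterm : ∀ j : ℕ, (∫ θ in Ioc (0:ℝ) (2*π), g ((j, j) : ℕ × ℕ) θ)
        = (((s j) ^ 2 * (2*π) : ℝ) : ℂ) := by
      intro j
      rw [hint ((j, j) : ℕ × ℕ)]
      exact hdiagterm j
    calc ∑' j : ℕ, (∫ θ in Ioc (0:ℝ) (2*π), g ((j, j) : ℕ × ℕ) θ)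
        = ∑' j : ℕ, (((s j) ^ 2 * (2*π) : ℝ) : ℂ) := tsum_congr hterm
      _ = (((∑' j, (s j) ^ 2) * (2*π) : ℝ) : ℂ) := by
          rw [← Complex.ofReal_tsum, tsum_mul_right]
  -- norm bound on the integral
  have hbound : ‖∫ θ in Ioc (0:ℝ) (2*π), a (w θ) * (starRingEnd ℂ) (a (w θ))‖
      ≤ (2*π) * C ^ 2 := by
    have hptbd : ∀ θ : ℝ, ‖a (w θ) * (starRingEnd ℂ) (a (w θ))‖ ≤ C ^ 2 := by
      intro θ
      rw [norm_mul, RCLike.norm_conj, ← pow_two]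
      have := hC (w θ) (hwd θ)
      have h0 : (0:ℝ) ≤ ‖a (w θ)‖ := norm_nonneg _
      nlinarith
    calc ‖∫ θ in Ioc (0:ℝ) (2*π), a (w θ) * (starRingEnd ℂ) (a (w θ))‖
        ≤ ∫ θ in Ioc (0:ℝ) (2*π), ‖a (w θ) * (starRingEnd ℂ) (a (w θ))‖ :=
          MeasureTheory.norm_integral_le_integral_norm _
      _ ≤ ∫ _θ in Ioc (0:ℝ) (2*π), C ^ 2 := by
          apply MeasureTheory.integral_mono_of_nonneg
          · exact Filter.Eventually.of_forall fun θ => norm_nonneg _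
          · exact MeasureTheory.integrable_const _
          · exact Filter.Eventually.of_forall fun θ => hptbd θ
      _ = (2*π) * C ^ 2 := by
          rw [MeasureTheory.setIntegral_const]
          simp [Real.volume_Ioc, ENNReal.toReal_ofReal (by positivity : (0:ℝ) ≤ 2*π), Real.pi_pos.le]
  -- put everything together
  have hfinal : (∑' j, (s j) ^ 2) * (2*π) ≤ (2*π) * C ^ 2 := by
    have h1 := hbound
    rw [hswap, hdiag] at h1
    rw [Complex.norm_real] at h1
    calc (∑' j, (s j) ^ 2) * (2*π) ≤ |(∑' j, (s j) ^ 2) * (2*π)| := le_abs_self _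
    _ ≤ (2*π) * C ^ 2 := h1
  have hπ : (0:ℝ) < 2*π := by positivity
  exact le_of_mul_le_mul_right (by linarith [hfinal]) hπ

lemma summable_sq_coef_of_memHinf {a : ℂ → ℂ} (ha : MemHinf a) :
    Summable fun n => ‖coef a n‖ ^ 2 := by
  obtain ⟨hda, C, hC⟩ := ha
  have hC0 : 0 ≤ C := le_trans (norm_nonneg (a 0)) (hC 0 (by simp [unitDisk]))
  apply summable_of_sum_range_le (c := C ^ 2) (fun n => by positivity)
  intro N
  -- limit as r → 1 of partial sums
  set u : ℕ → ℝ := fun i => ∑ j ∈ Finset.range N, (‖coef a j‖ * (1 - 1/(i+2) : ℝ) ^ j) ^ 2 with hu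
  have hr0 : ∀ i : ℕ, (0:ℝ) < 1 - 1/(i+2) := by
    intro i
    have h2 : (1:ℝ) < (i:ℝ) + 2 := by
      have := Nat.cast_nonneg (α := ℝ) i
      linarith
    have : (1:ℝ)/(i+2) < 1 := by
      rw [div_lt_one (by positivity)]
      exact h2
    linarith
  have hr1 : ∀ i : ℕ, (1 - 1/(i+2) : ℝ) < 1 := by
    intro i
    have : (0:ℝ) < 1/(i+2) := by positivity
    linarith
  have hui : ∀ i, u i ≤ C ^ 2 := by
    intro i
    calc u i ≤ ∑' j, (‖coef a j‖ * (1 - 1/(i+2) : ℝ) ^ j) ^ 2 := by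
          apply Summable.sum_le_tsum
          · intro j _
            positivity
          · -- summability of sq at radius r
            have hs : Summable fun j => ‖coef a j‖ * (1 - 1/(i+2) : ℝ) ^ j :=
              summable_coef_mul_pow_real hda (hr0 i) (hr1 i)
            have hsnn : ∀ j, (0:ℝ) ≤ ‖coef a j‖ * (1 - 1/(i+2) : ℝ) ^ j := by
              intro j
              have := (hr0 i).le
              positivity
            have hK := fun j => hs.le_tsum j fun m _ => hsnn m
            refine Summable.of_nonneg_of_le (fun j => by positivity)
              (f := fun j => (∑' m, ‖coef a m‖ * (1 - 1/(i+2) : ℝ) ^ m) *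
                (‖coef a j‖ * (1 - 1/(i+2) : ℝ) ^ j)) (fun j => ?_) (hs.mul_left _)
            rw [pow_two]
            exact mul_le_mul_of_nonneg_right (hK j) (hsnn j)
      _ ≤ C ^ 2 := parseval_le hda hC (hr0 i) (hr1 i)
  have hulim : Filter.Tendsto u Filter.atTop (nhds (∑ j ∈ Finset.range N, ‖coef a j‖ ^ 2)) := by
    rw [hu]
    apply tendsto_finset_sum
    intro j _
    have h1 : Filter.Tendsto (fun i : ℕ => (1 - 1/(i+2) : ℝ)) Filter.atTop (nhds 1) := by
      have h2 : Filter.Tendsto (fun i : ℕ => (1/(i+2) : ℝ)) Filter.atTop (nhds 0) := by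
        simp only [one_div]
        apply Filter.Tendsto.comp tendsto_inv_atTop_zero
        apply Filter.tendsto_atTop_add_const_right
        exact tendsto_natCast_atTop_atTop
      simpa using tendsto_const_nhds.sub h2
    have h3 : Filter.Tendsto (fun i : ℕ => ‖coef a j‖ * (1 - 1/(i+2) : ℝ) ^ j)
        Filter.atTop (nhds (‖coef a j‖ * 1 ^ j)) := tendsto_const_nhds.mul (h1.pow j)
    have h4 := (h3.pow 2)
    simpa using h4
  exact le_of_tendsto hulim (Filter.Eventually.of_forall hui)


/-- Cauchy-product coefficients of sequences. -/
def psiC (α φ : ℕ → ℂ) (n : ℕ) : ℂ := ∑ j ∈ range (n + 1), α j * φ (n - j)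

abbrev Hsp := lp (fun _ : ℕ => ℂ) 2

lemma memℓp_two_of {f : ℕ → ℂ} (hf : Summable fun n => ‖f n‖ ^ 2) : Memℓp f 2 := by
  apply memℓp_gen
  convert hf using 2 with n
  have h2 : ((2:ℝ≥0∞)).toReal = ((2:ℕ):ℝ) := by norm_num
  rw [h2, Real.rpow_natCast]

lemma summable_sq_of_memℓp {f : ℕ → ℂ} (hf : Memℓp f 2) : Summable fun n => ‖f n‖ ^ 2 := by
  have := memℓp_gen_iff (p := 2) (f := f) (by norm_num) |>.mp hf
  convert this using 2 with n
  have h2 : ((2:ℝ≥0∞)).toReal = ((2:ℕ):ℝ) := by norm_num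
  rw [h2, Real.rpow_natCast]

lemma lp_norm_le {x y : Hsp}
    (h : ∑' n, ‖(x : ℕ → ℂ) n‖ ^ 2 ≤ ∑' n, ‖(y : ℕ → ℂ) n‖ ^ 2) : ‖x‖ ≤ ‖y‖ := by
  have hp : (0:ℝ) < (2:ℝ≥0∞).toReal := by norm_num
  have hx := lp.norm_rpow_eq_tsum hp x
  have hy := lp.norm_rpow_eq_tsum hp y
  have h2 : ((2:ℝ≥0∞)).toReal = ((2:ℕ):ℝ) := by norm_num
  rw [h2, Real.rpow_natCast] at hx hy
  have hx2 : ‖x‖ ^ (2:ℕ) = ∑' n, ‖(x : ℕ → ℂ) n‖ ^ 2 := by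
    rw [hx]
    exact tsum_congr fun n => by rw [Real.rpow_natCast]
  have hy2 : ‖y‖ ^ (2:ℕ) = ∑' n, ‖(y : ℕ → ℂ) n‖ ^ 2 := by
    rw [hy]
    exact tsum_congr fun n => by rw [Real.rpow_natCast]
  have : ‖x‖ ^ (2:ℕ) ≤ ‖y‖ ^ (2:ℕ) := by rw [hx2, hy2]; exact h
  exact (pow_le_pow_iff_left₀ (norm_nonneg x) (norm_nonneg y) (by norm_num)).mp this

theorem exists_gamma (α φ : ℕ → ℂ) (hα2 : Summable fun n => ‖α n‖ ^ 2)
    (hφ2 : Summable fun n => ‖φ n‖ ^ 2) :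
    ∃ γ : ℕ → ℂ, (Summable fun n => ‖γ n‖ ^ 2) ∧
      ∀ n : ℕ, (∑' k : ℕ, (starRingEnd ℂ) (α k) * γ (n + k)) = psiC α φ n := by
  classical
  have hinjℕ : Function.Injective (fun n : ℕ => (n : ℤ)) := fun x y h => by simpa using h
  -- the shifted sequences
  have hshiftmem : ∀ t : ℕ, Memℓp (fun m : ℕ => extz α ((m:ℤ) - (t:ℤ))) 2 := by
    intro t
    apply memℓp_two_of
    exact ((summable_sq_extz_shift hα2 (t:ℤ)).comp_injective hinjℕ).congr fun n => rfl
  set shift : ℕ → Hsp := fun t => ⟨fun m : ℕ => extz α ((m:ℤ) - (t:ℤ)), hshiftmem t⟩ with hshift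
  set Φ : (ℕ →₀ ℂ) →ₗ[ℂ] Hsp := Finsupp.linearCombination ℂ shift with hΦ
  have hΦapp : ∀ (v : ℕ →₀ ℂ) (m : ℕ), ((Φ v : Hsp) : ℕ → ℂ) m = Pz α v (m:ℤ) := by
    intro v m
    rw [hΦ, Finsupp.linearCombination_apply, Finsupp.sum]
    rw [lp.coeFn_sum, Finset.sum_apply]
    rw [Pz]
    apply Finset.sum_congr rfl
    intro t _
    rw [lp.coeFn_smul, Pi.smul_apply, hshift]
    simp [smul_eq_mul]
  set φlp : Hsp := ⟨φ, memℓp_two_of hφ2⟩ with hφlp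
  set Qlp : (ℕ →₀ ℂ) → Hsp := fun v => ⟨fun n : ℕ => Qz α v (n:ℤ),
    memℓp_two_of (key_ineq hα2 v).1⟩ with hQlp
  have hQle : ∀ v, ‖Qlp v‖ ≤ ‖Φ v‖ := by
    intro v
    apply lp_norm_le
    have h1 : ∀ n : ℕ, ‖(Qlp v : ℕ → ℂ) n‖ ^ 2 = ‖Qz α v (n:ℤ)‖ ^ 2 := fun n => rfl
    have h2 : ∀ n : ℕ, ‖((Φ v : Hsp) : ℕ → ℂ) n‖ ^ 2 = ‖Pz α v (n:ℤ)‖ ^ 2 := fun n => by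
      rw [hΦapp]
    rw [tsum_congr h1, tsum_congr h2]
    exact (key_ineq hα2 v).2.2
  -- inner product computation
  have hinner : ∀ v : ℕ →₀ ℂ, inner (𝕜 := ℂ) (Qlp v) φlp
      = ∑ t ∈ v.support, (starRingEnd ℂ) (v t) * psiC α φ t := by
    intro v
    rw [lp.inner_eq_tsum]
    have hterm : ∀ n : ℕ, inner (𝕜 := ℂ) ((Qlp v : ℕ → ℂ) n) ((φlp : ℕ → ℂ) n)
        = ∑ t ∈ v.support, (starRingEnd ℂ) (v t) * (extz α ((t:ℤ) - n) * φ n) := by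
      intro n
      rw [RCLike.inner_apply']
      show (starRingEnd ℂ) (Qz α v (n:ℤ)) * φ n = _
      rw [Qz, map_sum, Finset.sum_mul]
      apply Finset.sum_congr rfl
      intro t _
      rw [map_mul, Complex.conj_conj]
      ring
    rw [tsum_congr hterm]
    rw [Summable.tsum_finsetSum (s := v.support) ?hsum]
    case hsum =>
      intro t _
      apply summable_of_ne_finset_zero (s := Finset.range (t+1))
      intro n hn
      have hnt : t < n := by
        by_contra hc
        exact hn (Finset.mem_range.mpr (by omega))
      rw [extz_neg α (by omega : (t:ℤ) - (n:ℤ) < 0)]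
      simp
    apply Finset.sum_congr rfl
    intro t _
    rw [tsum_mul_left]
    congr 1
    -- ∑' n, extz α (t - n) * φ n = psiC t
    rw [tsum_eq_sum (s := Finset.range (t+1)) ?hz]
    case hz =>
      intro n hn
      have hnt : t < n := by
        by_contra hc
        exact hn (Finset.mem_range.mpr (by omega))
      rw [extz_neg α (by omega : (t:ℤ) - (n:ℤ) < 0)]
      simp
    rw [psiC]
    rw [← Finset.sum_range_reflect (fun j => α j * φ (t - j)) (t+1)]
    apply Finset.sum_congr rfl
    intro n hn
    have hnt : n ≤ t := Nat.lt_succ_iff.mp (Finset.mem_range.mp hn)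
    have hcast : (t:ℤ) - (n:ℤ) = ((t - n : ℕ) : ℤ) := by
      rw [Int.ofNat_sub hnt]
    rw [hcast, extz_ofNat]
    have : t + 1 - 1 - n = t - n := by omega
    rw [this]
    have : t - (t - n) = n := by omega
    rw [this]
  -- the functional
  set Ψ : (ℕ →₀ ℂ) →ₗ[ℂ] ℂ :=
    Finsupp.linearCombination ℂ (fun t => (starRingEnd ℂ) (psiC α φ t)) with hΨ
  have hΨc : ∀ v, Ψ v = (starRingEnd ℂ) (inner (𝕜 := ℂ) (Qlp v) φlp) := by
    intro v
    rw [hinner, map_sum, hΨ, Finsupp.linearCombination_apply, Finsupp.sum]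
    apply Finset.sum_congr rfl
    intro t _
    rw [map_mul, Complex.conj_conj, smul_eq_mul]
  have hbound : ∀ v, ‖Ψ v‖ ≤ ‖φlp‖ * ‖Φ v‖ := by
    intro v
    rw [hΨc, RCLike.norm_conj]
    calc ‖inner (𝕜 := ℂ) (Qlp v) φlp‖ ≤ ‖Qlp v‖ * ‖φlp‖ := norm_inner_le_norm _ _
      _ ≤ ‖Φ v‖ * ‖φlp‖ := mul_le_mul_of_nonneg_right (hQle v) (norm_nonneg _)
      _ = ‖φlp‖ * ‖Φ v‖ := mul_comm _ _
  have hker : LinearMap.ker Φ ≤ LinearMap.ker Ψ := by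
    intro v hv
    rw [LinearMap.mem_ker] at hv ⊢
    have := hbound v
    rw [hv, norm_zero, mul_zero] at this
    exact norm_le_zero_iff.mp this
  set lam : ↥(LinearMap.range Φ) →ₗ[ℂ] ℂ :=
    ((LinearMap.ker Φ).liftQ Ψ hker).comp (LinearMap.quotKerEquivRange Φ).symm.toLinearMap
    with hlamdef
  have hlam : ∀ v : ℕ →₀ ℂ, lam ⟨Φ v, LinearMap.mem_range_self Φ v⟩ = Ψ v := by
    intro v
    rw [hlamdef]
    show ((LinearMap.ker Φ).liftQ Ψ hker)
      ((LinearMap.quotKerEquivRange Φ).symm ⟨Φ v, LinearMap.mem_range_self Φ v⟩) = Ψ v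
    rw [LinearMap.quotKerEquivRange_symm_apply_image]
    rfl
  have hlamb : ∀ w : ↥(LinearMap.range Φ), ‖lam w‖ ≤ ‖φlp‖ * ‖w‖ := by
    rintro ⟨w, v, rfl⟩
    have h1 : (⟨Φ v, LinearMap.mem_range_self Φ v⟩ : ↥(LinearMap.range Φ))
        = ⟨Φ v, ⟨v, rfl⟩⟩ := rfl
    rw [show (⟨Φ v, ⟨v, rfl⟩⟩ : ↥(LinearMap.range Φ))
      = ⟨Φ v, LinearMap.mem_range_self Φ v⟩ from rfl, hlam v]
    have h2 : ‖(⟨Φ v, LinearMap.mem_range_self Φ v⟩ : ↥(LinearMap.range Φ))‖ = ‖Φ v‖ := rfl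
    rw [h2]
    exact hbound v
  set lamc : ↥(LinearMap.range Φ) →L[ℂ] ℂ := LinearMap.mkContinuous lam ‖φlp‖ hlamb with hlamc
  obtain ⟨G, hG, -⟩ := exists_extension_norm_eq (LinearMap.range Φ) lamc
  set g : Hsp := (InnerProductSpace.toDual ℂ Hsp).symm G with hgdef
  refine ⟨fun n => (g : ℕ → ℂ) n, summable_sq_of_memℓp (lp.memℓp g), ?_⟩
  intro n
  have hkey : inner (𝕜 := ℂ) g (Φ (Finsupp.single n 1)) = (starRingEnd ℂ) (psiC α φ n) := by
    rw [hgdef, InnerProductSpace.toDual_symm_apply]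
    have hx := hG ⟨Φ (Finsupp.single n 1), LinearMap.mem_range_self Φ _⟩
    rw [show ((⟨Φ (Finsupp.single n 1), LinearMap.mem_range_self Φ _⟩ :
      ↥(LinearMap.range Φ)) : Hsp) = Φ (Finsupp.single n 1) from rfl] at hx
    rw [hx, hlamc, LinearMap.mkContinuous_apply, hlam]
    rw [hΨ, Finsupp.linearCombination_single, one_smul]
  have hx3 : ∀ m : ℕ, ((Φ (Finsupp.single n 1) : Hsp) : ℕ → ℂ) m = extz α ((m:ℤ) - (n:ℤ)) := by
    intro m
    rw [hΦapp, Pz, Finsupp.support_single_ne_zero n one_ne_zero]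
    rw [Finset.sum_singleton, Finsupp.single_eq_same, one_mul]
  have hkey2 : (∑' m : ℕ, (starRingEnd ℂ) ((g : ℕ → ℂ) m) * extz α ((m:ℤ) - (n:ℤ)))
      = (starRingEnd ℂ) (psiC α φ n) := by
    rw [← hkey, lp.inner_eq_tsum]
    exact tsum_congr fun m => by rw [RCLike.inner_apply', hx3 m]
  have hkey3 : (∑' m : ℕ, (g : ℕ → ℂ) m * (starRingEnd ℂ) (extz α ((m:ℤ) - (n:ℤ))))
      = psiC α φ n := by
    have := congrArg (starRingEnd ℂ) hkey2
    rw [Complex.conj_conj, Complex.conj_tsum] at this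
    rw [← this]
    apply tsum_congr
    intro m
    rw [map_mul, Complex.conj_conj]
  rw [← hkey3]
  rw [← Function.Injective.tsum_eq
    (f := fun m : ℕ => (g : ℕ → ℂ) m * (starRingEnd ℂ) (extz α ((m:ℤ) - (n:ℤ))))
    (add_right_injective n) ?hsupp]
  case hsupp =>
    intro m hm
    rw [Function.mem_support] at hm
    by_contra hr
    apply hm
    have hmn : m < n := by
      by_contra hc
      push_neg at hc
      exact hr ⟨m - n, show n + (m - n) = m by omega⟩
    rw [extz_neg α (by omega : (m:ℤ) - (n:ℤ) < 0)]
    simp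
  apply tsum_congr
  intro k
  have hcast : (((n + k : ℕ)):ℤ) - (n:ℤ) = ((k:ℕ):ℤ) := by push_cast; ring
  rw [hcast, extz_ofNat]
  ring


end Stmt1

/-- for every `a ∈ H^∞` and `f ∈ H²`, the function `a·f`
lies in the range `M(ā) = T_{\bar a} H²`, i.e. `aH² ⊆ M(ā)`. -/
theorem stmt1 (a f : ℂ → ℂ) (ha : MemHinf a) (hf : MemH2 f) :
    MemMbar a fun z => a z * f z := by
  obtain ⟨γ, hγ2, hγ⟩ := Stmt1.exists_gamma (coef a) (coef f)
    (Stmt1.summable_sq_coef_of_memHinf ha) hf.2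
  obtain ⟨g, hg, hcoef⟩ := Stmt1.exists_H2_fun γ hγ2
  refine ⟨g, hg, ?_⟩
  intro z hz
  show a z * f z = Tbar a g z
  rw [Tbar]
  have hinner : ∀ n : ℕ, (∑' k : ℕ, (starRingEnd ℂ) (coef a k) * coef g (n + k))
      = Stmt1.psiC (coef a) (coef f) n := by
    intro n
    rw [← hγ n]
    exact tsum_congr fun k => by rw [hcoef]
  have h1 : ∀ n : ℕ, (∑' k : ℕ, (starRingEnd ℂ) (coef a k) * coef g (n + k)) * z ^ n
      = Stmt1.cp a f n * z ^ n := by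
    intro n
    rw [hinner n]
    rfl
  rw [tsum_congr h1]
  exact Stmt1.mul_eq_tsum_cp ha.1 hf.1 hz
end
end

section
/- Let a(z) = ∏_{j=1}^N (z − ζ_j) with each ζ_j on the unit circle. Then the range space M(\bar{a}) = T_{\bar{a}} H^2 decomposes as the algebraic direct sum M(\bar{a}) = aH^2 ∔ P_{N−1}, where P_{N−1} is the space of polynomials of degree at most N−1; in particular the sum is direct: aH^2 ∩ P_{N−1} = {0}. -/
open Complex Set

noncomputable section

open Polynomial Filter Finset

lemma coefCongr {f g : ℂ → ℂ} (h : Set.EqOn f g unitDisk) (n : ℕ) : coef f n = coef g n := by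
  have h0 : (0:ℂ) ∈ unitDisk := by simp [unitDisk]
  have : f =ᶠ[nhds 0] g :=
    Filter.eventuallyEq_of_mem (Metric.isOpen_ball.mem_nhds h0) h
  unfold coef
  rw [this.iteratedDeriv_eq]

lemma summable_pow {c : ℕ → ℂ} (hc : ∃ C, ∀ n, ‖c n‖ ≤ C) {z : ℂ} (hz : z ∈ unitDisk) :
    Summable fun n => c n * z ^ n := by
  obtain ⟨C, hC⟩ := hc
  have hz1 : ‖z‖ < 1 := by simpa [unitDisk] using hz
  refine Summable.of_norm_bounded (g := fun n => C * ‖z‖ ^ n)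
    ((summable_geometric_of_lt_one (norm_nonneg z) hz1).mul_left C) fun n => ?_
  rw [norm_mul, norm_pow]
  exact mul_le_mul_of_nonneg_right (hC n) (by positivity)

lemma master {c : ℕ → ℂ} (hc : ∃ C, ∀ n, ‖c n‖ ≤ C) :
    DifferentiableOn ℂ (fun z => ∑' n, c n * z ^ n) unitDisk ∧
      ∀ n, coef (fun z => ∑' n, c n * z ^ n) n = c n := by
  obtain ⟨C, hC⟩ := hc
  set p := FormalMultilinearSeries.ofScalars ℂ c with hp
  have hrad : (1 : ENNReal) ≤ p.radius := by
    refine ENNReal.le_of_forall_nnreal_lt fun r hr => ?_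
    refine p.le_radius_of_bound C fun n => ?_
    have : ‖p n‖ = ‖c n‖ := FormalMultilinearSeries.ofScalars_norm ..
    rw [this]
    calc ‖c n‖ * (r:ℝ)^n ≤ C * 1 ^ n := by
          have hr1 : (r:ℝ) ≤ 1 := by
            have := hr.le
            exact_mod_cast this
          refine mul_le_mul (hC n) (pow_le_pow_left₀ (by positivity) hr1 n) (by positivity)
            ((norm_nonneg _).trans (hC 0))
      _ = C := by norm_num
  have hball : HasFPowerSeriesOnBall (fun z => ∑' n, c n * z ^ n) p 0 1 := by
    have h1 : HasFPowerSeriesOnBall p.sum p 0 p.radius :=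
      p.hasFPowerSeriesOnBall (lt_of_lt_of_le one_pos hrad)
    have h2 := h1.mono one_pos hrad
    convert h2 using 2 with z
    rw [FormalMultilinearSeries.sum]
    congr 1 with n
    rw [hp, FormalMultilinearSeries.ofScalars_apply_eq, smul_eq_mul, mul_comm]
  constructor
  · have := hball.differentiableOn
    intro z hz
    refine (this z ?_).mono ?_
    · simpa [unitDisk, EMetric.mem_ball, enorm_eq_nnnorm, ← NNReal.coe_lt_one] using hz
    · intro w hw
      simpa [unitDisk, EMetric.mem_ball, enorm_eq_nnnorm, ← NNReal.coe_lt_one] using hw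
  · intro n
    have h1 := hball.factorial_smul (1 : ℂ) n
    have h2 : p n (fun _ => (1:ℂ)) = c n := by
      rw [hp, FormalMultilinearSeries.ofScalars_apply_eq, one_pow, smul_eq_mul, mul_one]
    rw [coef, iteratedDeriv_eq_iteratedFDeriv, ← h1, h2, nsmul_eq_mul]
    exact mul_div_cancel_left₀ _ (by exact_mod_cast n.factorial_ne_zero)

-- coefficients from a power series at 0
lemma coef_eq_coeff {f : ℂ → ℂ} {p : FormalMultilinearSeries ℂ ℂ ℂ} {r : ENNReal}
    (h : HasFPowerSeriesOnBall f p 0 r) (n : ℕ) : coef f n = p.coeff n := by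
  have h1 := h.factorial_smul (1 : ℂ) n
  rw [coef, iteratedDeriv_eq_iteratedFDeriv, ← h1, FormalMultilinearSeries.coeff, nsmul_eq_mul]
  exact mul_div_cancel_left₀ _ (by exact_mod_cast n.factorial_ne_zero)

lemma sq_summable_bounded {c : ℕ → ℂ} (h : Summable fun n => ‖c n‖ ^ 2) :
    ∃ C, ∀ n, ‖c n‖ ≤ C := by
  refine ⟨Real.sqrt (∑' n, ‖c n‖ ^ 2), fun n => ?_⟩
  have h1 : ‖c n‖ ^ 2 ≤ ∑' n, ‖c n‖ ^ 2 := Summable.le_tsum h n fun m _ => by positivity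
  have := Real.sqrt_le_sqrt h1
  rwa [Real.sqrt_sq (norm_nonneg _)] at this

lemma expand {f : ℂ → ℂ} (hd : DifferentiableOn ℂ f unitDisk)
    (hb : ∃ C, ∀ n, ‖coef f n‖ ≤ C) :
    ∀ z ∈ unitDisk, f z = ∑' n, coef f n * z ^ n := by
  set F := fun z => ∑' n, coef f n * z ^ n with hF
  obtain ⟨hFd, hFc⟩ := master hb
  have h0 : (0:ℂ) ∈ unitDisk := by simp [unitDisk]
  have hopen : IsOpen unitDisk := Metric.isOpen_ball
  have hfa : AnalyticAt ℂ f 0 := hd.analyticAt (hopen.mem_nhds h0)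
  obtain ⟨p, hp⟩ := hfa
  obtain ⟨r, hr⟩ := hp
  have hcoeff : ∀ n, p.coeff n = coef f n := fun n => (coef_eq_coeff hr n).symm
  have hev : f =ᶠ[nhds 0] F := by
    have := hasFPowerSeriesAt_iff.mp ⟨r, hr⟩
    filter_upwards [this] with z hz
    have : f (0 + z) = ∑' n, z ^ n • p.coeff n := hz.tsum_eq.symm
    rw [zero_add] at this
    rw [this, hF]
    congr 1 with n
    rw [hcoeff, smul_eq_mul, mul_comm]
  have hfa' : AnalyticOnNhd ℂ f unitDisk := hd.analyticOnNhd hopen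
  have hFa' : AnalyticOnNhd ℂ F unitDisk := hFd.analyticOnNhd hopen
  intro z hz
  exact hfa'.eqOn_of_preconnected_of_eventuallyEq hFa'
    (convex_ball (0:ℂ) 1).isPreconnected h0 hev hz

-- polynomial eval as power series
lemma poly_tsum (q : Polynomial ℂ) (z : ℂ) : q.eval z = ∑' n, q.coeff n * z ^ n := by
  rw [tsum_eq_sum (s := Finset.range (q.natDegree + 1))
    (fun n hn => by
      rw [q.coeff_eq_zero_of_natDegree_lt (by simpa using hn), zero_mul])]
  rw [eval_eq_sum_range]

lemma poly_coeff_bounded (q : Polynomial ℂ) : ∃ C, ∀ n, ‖q.coeff n‖ ≤ C := by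
  refine ⟨∑ m ∈ Finset.range (q.natDegree + 1), ‖q.coeff m‖, fun n => ?_⟩
  by_cases hn : n < q.natDegree + 1
  · exact Finset.single_le_sum (f := fun m => ‖q.coeff m‖) (fun m _ => norm_nonneg _)
      (Finset.mem_range.mpr hn)
  · rw [q.coeff_eq_zero_of_natDegree_lt (by omega), norm_zero]
    exact Finset.sum_nonneg fun m _ => norm_nonneg _

lemma coef_poly (q : Polynomial ℂ) (n : ℕ) : coef (fun z => q.eval z) n = q.coeff n := by
  have := (master (poly_coeff_bounded q)).2 n
  rw [← this]
  exact coefCongr (fun z _ => poly_tsum q z) n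

/-- Convolution of a polynomial's coefficients with a sequence: the `j`-th
coefficient of `q(z) * ∑ u_n z^n`. -/
def conv (q : Polynomial ℂ) (u : ℕ → ℂ) (j : ℕ) : ℂ :=
  ∑ m ∈ Finset.range (j + 1), q.coeff m * u (j - m)

lemma conv_eq_sum_if (q : Polynomial ℂ) (u : ℕ → ℂ) (j R : ℕ) (hR : j ≤ R) :
    conv q u j = ∑ m ∈ Finset.range (R + 1), q.coeff m * (if m ≤ j then u (j - m) else 0) := by
  have h1 : conv q u j
      = ∑ m ∈ Finset.range (j + 1), q.coeff m * (if m ≤ j then u (j - m) else 0) :=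
    Finset.sum_congr rfl fun m hm => by
      rw [if_pos (Nat.lt_succ_iff.mp (Finset.mem_range.mp hm))]
  rw [h1]
  refine Finset.sum_subset (Finset.range_subset_range.mpr (by omega)) fun m hm1 hm2 => ?_
  rw [if_neg fun h => hm2 (Finset.mem_range.mpr (by omega)), mul_zero]

lemma conv_eq_sum_if' (q : Polynomial ℂ) (u : ℕ → ℂ) (j R : ℕ) (hR : q.natDegree ≤ R) :
    conv q u j = ∑ m ∈ Finset.range (R + 1), q.coeff m * (if m ≤ j then u (j - m) else 0) := by
  rw [conv_eq_sum_if q u j (max j R) (le_max_left _ _)]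
  symm
  refine Finset.sum_subset (Finset.range_subset_range.mpr (by omega)) fun m hm1 hm2 => ?_
  rw [q.coeff_eq_zero_of_natDegree_lt ?_, zero_mul]
  simp only [Finset.mem_range] at hm1 hm2
  omega

lemma conv_bounded (q : Polynomial ℂ) {u : ℕ → ℂ} (hu : ∃ C, ∀ n, ‖u n‖ ≤ C) :
    ∃ C, ∀ j, ‖conv q u j‖ ≤ C := by
  obtain ⟨C, hC⟩ := hu
  have hC0 : 0 ≤ C := (norm_nonneg _).trans (hC 0)
  refine ⟨(∑ m ∈ Finset.range (q.natDegree + 1), ‖q.coeff m‖) * C, fun j => ?_⟩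
  rw [conv_eq_sum_if' q u j q.natDegree le_rfl]
  calc ‖∑ m ∈ Finset.range (q.natDegree + 1), q.coeff m * (if m ≤ j then u (j - m) else 0)‖
      ≤ ∑ m ∈ Finset.range (q.natDegree + 1), ‖q.coeff m * (if m ≤ j then u (j - m) else 0)‖ :=
        norm_sum_le _ _
    _ ≤ ∑ m ∈ Finset.range (q.natDegree + 1), ‖q.coeff m‖ * C := by
        refine Finset.sum_le_sum fun m _ => ?_
        rw [norm_mul]
        refine mul_le_mul_of_nonneg_left ?_ (norm_nonneg _)
        split_ifs
        · exact hC _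
        · simpa using hC0
    _ = _ := by rw [← Finset.sum_mul]

/-- Product of a polynomial with a power series, on the disk. -/
lemma prod_tsum (q : Polynomial ℂ) {u : ℕ → ℂ} (hu : ∃ C, ∀ n, ‖u n‖ ≤ C)
    {z : ℂ} (hz : z ∈ unitDisk) :
    q.eval z * ∑' n, u n * z ^ n = ∑' j, conv q u j * z ^ j := by
  have key : ∀ m : ℕ, (∑' n, u n * z ^ n) * z ^ m
      = ∑' j, (if m ≤ j then u (j - m) else 0) * z ^ j := by
    intro m
    have h1 : (∑' n, u n * z ^ n) * z ^ m = ∑' n, u n * z ^ (n + m) := by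
      rw [← tsum_mul_right]
      congr 1 with n
      rw [pow_add, mul_assoc]
    rw [h1]
    have hinj : Function.Injective (fun n : ℕ => n + m) := add_left_injective m
    have h2 := hinj.tsum_eq (f := fun j => (if m ≤ j then u (j - m) else 0) * z ^ j) ?_
    · rw [← h2]
      congr 1 with n
      show u n * z ^ (n + m) = (if m ≤ n + m then u (n + m - m) else 0) * z ^ (n + m)
      rw [if_pos (by omega)]
      congr 2
      omega
    · intro j hj
      rcases le_or_gt m j with h | h
      · exact ⟨j - m, by show j - m + m = j; omega⟩
      · exfalso
        apply hj
        show (if m ≤ j then u (j - m) else 0) * z ^ j = 0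
        rw [if_neg (by omega), zero_mul]
  have heval : q.eval z = ∑ m ∈ Finset.range (q.natDegree + 1), q.coeff m * z ^ m :=
    q.eval_eq_sum_range z
  rw [heval, Finset.sum_mul]
  have step : ∀ m ∈ Finset.range (q.natDegree + 1), q.coeff m * z ^ m * (∑' n, u n * z ^ n)
      = ∑' j, (q.coeff m * (if m ≤ j then u (j - m) else 0)) * z ^ j := by
    intro m _
    calc q.coeff m * z ^ m * (∑' n, u n * z ^ n)
        = q.coeff m * ((∑' n, u n * z ^ n) * z ^ m) := by ring
      _ = q.coeff m * ∑' j, (if m ≤ j then u (j - m) else 0) * z ^ j := by rw [key m]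
      _ = ∑' j, (q.coeff m * (if m ≤ j then u (j - m) else 0)) * z ^ j := by
          rw [← tsum_mul_left]
          congr 1 with j
          ring
  rw [Finset.sum_congr rfl step, ← Summable.tsum_finsetSum]
  · congr 1 with j
    rw [← Finset.sum_mul, ← conv_eq_sum_if' q u j q.natDegree le_rfl]
  · intro m _
    obtain ⟨C, hC⟩ := hu
    refine summable_pow ⟨‖q.coeff m‖ * C, fun j => ?_⟩ hz
    rw [norm_mul]
    refine mul_le_mul_of_nonneg_left ?_ (norm_nonneg _)
    split_ifs
    · exact hC _
    · simpa using (norm_nonneg (u 0)).trans (hC 0)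

lemma conv_one (u : ℕ → ℂ) (j : ℕ) : conv 1 u j = u j := by
  rw [conv]
  rw [Finset.sum_eq_single 0]
  · simp
  · intro m hm hm0
    rw [Polynomial.coeff_one, if_neg (by omega), zero_mul]
  · simp

lemma conv_cons (ζ : ℂ) (B : Polynomial ℂ) (u : ℕ → ℂ) (j : ℕ) :
    conv ((X - C ζ) * B) u (j + 1) = conv B u j - ζ * conv B u (j + 1) := by
  have hA : ∀ m : ℕ, ((X - C ζ) * B).coeff (m + 1) = B.coeff m - ζ * B.coeff (m + 1) := by
    intro m
    rw [mul_comm, Polynomial.coeff_mul_X_sub_C]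
    ring
  have hA0 : ((X - C ζ) * B).coeff 0 = -(ζ * B.coeff 0) := by
    rw [Polynomial.mul_coeff_zero]
    simp
  have split : conv ((X - C ζ) * B) u (j + 1)
      = (∑ i ∈ Finset.range (j + 1), ((X - C ζ) * B).coeff (i + 1) * u (j + 1 - (i + 1)))
        + ((X - C ζ) * B).coeff 0 * u (j + 1) := by
    rw [conv]
    exact Finset.sum_range_succ' _ (j + 1)
  rw [split]
  simp only [hA, hA0]
  have e1 : ∀ i, (B.coeff i - ζ * B.coeff (i + 1)) * u (j + 1 - (i + 1))
      = B.coeff i * u (j - i) - ζ * (B.coeff (i + 1) * u (j + 1 - (i + 1))) := by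
    intro i
    have : j + 1 - (i + 1) = j - i := by omega
    rw [this]
    ring
  rw [Finset.sum_congr rfl fun i _ => e1 i, Finset.sum_sub_distrib]
  have e2 : conv B u j = ∑ i ∈ Finset.range (j + 1), B.coeff i * u (j - i) := rfl
  have e3 : conv B u (j + 1)
      = (∑ i ∈ Finset.range (j + 1), B.coeff (i + 1) * u (j + 1 - (i + 1)))
        + B.coeff 0 * u (j + 1) := by
    rw [conv]
    exact Finset.sum_range_succ' _ (j + 1)
  rw [e2, e3]
  rw [← Finset.mul_sum]
  ring

lemma conv_tendsto (B : Polynomial ℂ) {u : ℕ → ℂ} (hu : Tendsto u atTop (nhds 0)) :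
    Tendsto (conv B u) atTop (nhds 0) := by
  have hev : ∀ᶠ j in atTop, conv B u j
      = ∑ m ∈ Finset.range (B.natDegree + 1), B.coeff m * u (j - m) := by
    filter_upwards [eventually_ge_atTop B.natDegree] with j hj
    rw [conv_eq_sum_if' B u j B.natDegree le_rfl]
    exact Finset.sum_congr rfl fun m hm => by
      rw [if_pos (le_trans (Nat.lt_succ_iff.mp (Finset.mem_range.mp hm)) hj)]
  have : Tendsto (fun j => ∑ m ∈ Finset.range (B.natDegree + 1), B.coeff m * u (j - m))
      atTop (nhds 0) := by
    have : Tendsto (fun j => ∑ m ∈ Finset.range (B.natDegree + 1), B.coeff m * u (j - m))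
        atTop (nhds (∑ m ∈ Finset.range (B.natDegree + 1), B.coeff m * 0)) := by
      refine tendsto_finset_sum _ fun m _ => ?_
      exact (hu.comp (tendsto_sub_atTop_nat m)).const_mul _
    simpa using this
  exact Tendsto.congr' (Filter.EventuallyEq.symm hev) this

lemma peel {v : ℕ → ℂ} {ζ : ℂ} (hζ : ‖ζ‖ = 1) (hv : Tendsto v atTop (nhds 0)) (M : ℕ)
    (h : ∀ j, M + 1 ≤ j → v (j - 1) - ζ * v j = 0) : ∀ j, M ≤ j → v j = 0 := by
  have hnorm : ∀ k, ‖v (M + k)‖ = ‖v M‖ := by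
    intro k
    induction k with
    | zero => rfl
    | succ k ih =>
      have := h (M + k + 1) (by omega)
      have h2 : v (M + k) = ζ * v (M + k + 1) := by
        have e : M + k + 1 - 1 = M + k := by omega
        rw [e] at this
        linear_combination this
      rw [show M + (k + 1) = M + k + 1 from rfl, ← ih, h2, norm_mul, hζ, one_mul]
  have h0 : ‖v M‖ = 0 := by
    have h1 : Tendsto (fun k => ‖v (M + k)‖) atTop (nhds 0) := by
      have := (hv.comp (tendsto_add_atTop_nat M)).norm
      rw [norm_zero] at this
      refine this.congr fun k => ?_
      simp [Function.comp, Nat.add_comm]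
    have h2 : Tendsto (fun _ : ℕ => ‖v M‖) atTop (nhds 0) := h1.congr fun k => hnorm k
    exact tendsto_nhds_unique tendsto_const_nhds h2
  intro j hj
  have := hnorm (j - M)
  rw [show M + (j - M) = j by omega] at this
  rw [← norm_eq_zero, this, h0]

lemma rec_lemma : ∀ (l : List ℂ), (∀ ζ ∈ l, ‖ζ‖ = 1) → ∀ u : ℕ → ℂ,
    Tendsto u atTop (nhds 0) →
    (∀ j, l.length ≤ j → conv (l.map (fun w => X - C w)).prod u j = 0) → ∀ n, u n = 0 := by
  intro l
  induction l with
  | nil =>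
    intro _ u _ h n
    have := h n (by simp)
    rwa [List.map_nil, List.prod_nil, conv_one] at this
  | cons ζ l ih =>
    intro hl u hu h
    set B := (l.map (fun w => X - C w)).prod with hB
    have hv0 : Tendsto (conv B u) atTop (nhds 0) := conv_tendsto B hu
    have hrec : ∀ j, l.length + 1 ≤ j → conv B u (j - 1) - ζ * conv B u j = 0 := by
      intro j hj
      obtain ⟨j', rfl⟩ : ∃ j', j = j' + 1 := ⟨j - 1, by omega⟩
      have := h (j' + 1) (by simpa using hj)
      rw [List.map_cons, List.prod_cons, conv_cons] at this
      simpa using this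
    have hvz : ∀ j, l.length ≤ j → conv B u j = 0 :=
      peel (hl ζ (by simp)) hv0 l.length hrec
    exact ih (fun w hw => hl w (by simp [hw])) u hu hvz

section Poly
variable {N : ℕ} (ζ : Fin N → ℂ)

lemma reverse_prod (s : Finset (Fin N)) (f : Fin N → Polynomial ℂ) :
    (∏ i ∈ s, f i).reverse = ∏ i ∈ s, (f i).reverse := by
  classical
  induction s using Finset.cons_induction with
  | empty => simpa using Polynomial.reverse_C (1:ℂ)
  | cons a s ha ih =>
    rw [Finset.prod_cons, Finset.prod_cons, Polynomial.reverse_mul_of_domain, ih]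

lemma reverse_X_sub_C (w : ℂ) : (X - C w).reverse = 1 - C w * X := by
  have hnd : (X - C w).natDegree = 1 := natDegree_X_sub_C w
  ext n
  rw [Polynomial.coeff_reverse, hnd]
  match n with
  | 0 => simp
  | 1 => simp [Polynomial.revAt_le, Polynomial.coeff_one]
  | (k+2) =>
    rw [← Polynomial.revAtFun_eq, Polynomial.revAtFun, if_neg (by omega)]
    simp [Polynomial.coeff_one, Polynomial.coeff_X, Polynomial.coeff_C]

lemma A_monic : (∏ j, (X - C (ζ j))).Monic :=
  Polynomial.monic_prod_of_monic _ _ fun j _ => monic_X_sub_C _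

lemma A_natDegree : (∏ j, (X - C (ζ j))).natDegree = N := by
  rw [Polynomial.natDegree_prod_of_monic _ _ fun j _ => monic_X_sub_C _]
  simp

lemma conj_coeff (hζ : ∀ j, ‖ζ j‖ = 1) (k : ℕ) (hk : k ≤ N) :
    (starRingEnd ℂ) ((∏ j, (X - C (ζ j))).coeff k)
      = (∏ j, -(starRingEnd ℂ) (ζ j)) * (∏ j, (X - C (ζ j))).coeff (N - k) := by
  set A := ∏ j, (X - C (ζ j)) with hA
  set c := ∏ j, -(starRingEnd ℂ) (ζ j) with hc
  set A' := ∏ j, (X - C ((starRingEnd ℂ) (ζ j))) with hA'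
  have hmap : A.map (starRingEnd ℂ) = A' := by
    rw [hA, hA', Polynomial.map_prod]
    exact Finset.prod_congr rfl fun j _ => by
      rw [Polynomial.map_sub, Polynomial.map_X, Polynomial.map_C]
  have hrev : A'.reverse = Polynomial.C c * A := by
    rw [hA', reverse_prod]
    have : ∀ j : Fin N, (X - C ((starRingEnd ℂ) (ζ j))).reverse
        = C (-(starRingEnd ℂ) (ζ j)) * (X - C (ζ j)) := by
      intro j
      rw [reverse_X_sub_C]
      have h1 : (starRingEnd ℂ) (ζ j) * ζ j = 1 := by
        have h2 : (Complex.normSq (ζ j) : ℂ) = 1 := by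
          rw [Complex.normSq_eq_norm_sq, hζ j]
          norm_num
        rw [mul_comm, Complex.mul_conj, h2]
      rw [mul_sub, ← Polynomial.C_mul,
        show (-(starRingEnd ℂ) (ζ j)) * ζ j = -1 by rw [neg_mul, h1]]
      simp only [map_neg, Polynomial.C_1, neg_mul]
      ring
    rw [Finset.prod_congr rfl fun j _ => this j, Finset.prod_mul_distrib, hA, hc, ← map_prod]
  have hndA' : A'.natDegree = N := by
    rw [hA', Polynomial.natDegree_prod_of_monic _ _ fun j _ => monic_X_sub_C _]
    simp
  have h1 : (starRingEnd ℂ) (A.coeff k) = A'.coeff k := by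
    rw [← hmap, Polynomial.coeff_map]
  have h2 : A'.coeff k = A'.reverse.coeff (N - k) := by
    rw [Polynomial.coeff_reverse, hndA', Polynomial.revAt_le (by omega),
      show N - (N - k) = k by omega]
  rw [h1, h2, hrev, Polynomial.coeff_C_mul]

end Poly

section Main
variable {N : ℕ} (ζ : Fin N → ℂ)

lemma aA_eval (z : ℂ) : (∏ j, (z - ζ j)) = (∏ j, (X - C (ζ j))).eval z := by
  rw [Polynomial.eval_prod]
  exact Finset.prod_congr rfl fun j _ => by simp

lemma coef_a (k : ℕ) :
    coef (fun z => ∏ j, (z - ζ j)) k = (∏ j, (X - C (ζ j))).coeff k := by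
  rw [coefCongr (fun z _ => aA_eval ζ z) k, coef_poly]

lemma unit_mul_conj (hζ : ∀ j, ‖ζ j‖ = 1) (j : Fin N) :
    (starRingEnd ℂ) (ζ j) * ζ j = 1 := by
  have h2 : (Complex.normSq (ζ j) : ℂ) = 1 := by
    rw [Complex.normSq_eq_norm_sq, hζ j]
    norm_num
  rw [mul_comm, Complex.mul_conj, h2]

lemma c_mul_conj (hζ : ∀ j, ‖ζ j‖ = 1) :
    (∏ j, -(starRingEnd ℂ) (ζ j)) * (starRingEnd ℂ) (∏ j, -(starRingEnd ℂ) (ζ j)) = 1 := by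
  rw [map_prod, ← Finset.prod_mul_distrib]
  rw [Finset.prod_congr rfl (fun j _ => ?_), Finset.prod_const_one]
  rw [map_neg, Complex.conj_conj, neg_mul_neg, unit_mul_conj ζ hζ j]

/-- the inner sum of `Tbar`. -/
lemma W (hζ : ∀ j, ‖ζ j‖ = 1) {u : ℕ → ℂ} (hu : ∃ C, ∀ n, ‖u n‖ ≤ C) (n : ℕ) :
    ∑' k, (starRingEnd ℂ) ((∏ j, (X - C (ζ j))).coeff k) * u (n + k)
      = (∏ j, -(starRingEnd ℂ) (ζ j)) * conv (∏ j, (X - C (ζ j))) u (n + N) := by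
  set A := ∏ j, (X - C (ζ j)) with hA
  set c := ∏ j, -(starRingEnd ℂ) (ζ j) with hc
  have h1 : ∑' k, (starRingEnd ℂ) (A.coeff k) * u (n + k)
      = ∑ k ∈ Finset.range (N + 1), (starRingEnd ℂ) (A.coeff k) * u (n + k) := by
    refine tsum_eq_sum fun k hk => ?_
    rw [A.coeff_eq_zero_of_natDegree_lt, map_zero, zero_mul]
    rw [A_natDegree]
    simpa using hk
  rw [h1]
  have h2 : ∀ k ∈ Finset.range (N + 1), (starRingEnd ℂ) (A.coeff k) * u (n + k)
      = c * A.coeff (N - k) * u (n + k) := by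
    intro k hk
    rw [conj_coeff ζ hζ k (by simpa using Nat.lt_succ_iff.mp (Finset.mem_range.mp hk))]
  rw [Finset.sum_congr rfl h2]
  have h3 := Finset.sum_range_reflect (fun m => c * A.coeff m * u (n + N - m)) (N + 1)
  have h4 : ∀ k ∈ Finset.range (N + 1),
      c * A.coeff (N + 1 - 1 - k) * u (n + N - (N + 1 - 1 - k))
        = c * A.coeff (N - k) * u (n + k) := by
    intro k hk
    have hkN : k ≤ N := Nat.lt_succ_iff.mp (Finset.mem_range.mp hk)
    rw [show N + 1 - 1 - k = N - k by omega, show n + N - (N - k) = n + k by omega]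
  rw [← Finset.sum_congr rfl h4, h3]
  rw [conv_eq_sum_if' A u (n + N) N (le_of_eq (A_natDegree ζ)), Finset.mul_sum]
  refine Finset.sum_congr rfl fun m hm => ?_
  rw [if_pos (by simp at hm; omega)]
  ring

lemma tendsto_of_l2 {u : ℕ → ℂ} (h : Summable fun n => ‖u n‖ ^ 2) :
    Tendsto u atTop (nhds 0) := by
  rw [tendsto_zero_iff_norm_tendsto_zero]
  have h1 := h.tendsto_atTop_zero
  have h2 : Tendsto (fun n => Real.sqrt (‖u n‖ ^ 2)) atTop (nhds 0) := by
    have h3 := (Real.continuous_sqrt.tendsto 0).comp h1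
    rw [Real.sqrt_zero] at h3
    exact h3
  refine h2.congr fun n => ?_
  rw [Real.sqrt_sq (norm_nonneg _)]

lemma l2_add {x y : ℕ → ℂ} (hx : Summable fun n => ‖x n‖ ^ 2)
    (hy : Summable fun n => ‖y n‖ ^ 2) : Summable fun n => ‖x n + y n‖ ^ 2 := by
  refine Summable.of_nonneg_of_le (fun n => by positivity)
    (fun n => ?_) ((hx.add hy).mul_left 2)
  calc ‖x n + y n‖ ^ 2 ≤ (‖x n‖ + ‖y n‖) ^ 2 := by
        have := norm_add_le (x n) (y n)
        have h0 : (0:ℝ) ≤ ‖x n + y n‖ := norm_nonneg _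
        nlinarith
    _ ≤ 2 * (‖x n‖ ^ 2 + ‖y n‖ ^ 2) := by nlinarith [sq_nonneg (‖x n‖ - ‖y n‖)]
lemma part_direct (hζ : ∀ j, ‖ζ j‖ = 1) :
    ∀ f p, MemH2 f → MemPoly N p →
      (∀ z ∈ unitDisk, (∏ j, (z - ζ j)) * f z = p z) →
        ∀ z ∈ unitDisk, p z = 0 := by
  intro f p hf hp heq z hz
  obtain ⟨q, hqdeg, hpq⟩ := hp
  set A := ∏ j, (X - C (ζ j)) with hA
  set u := coef f with hu
  have hub : ∃ C, ∀ n, ‖u n‖ ≤ C := sq_summable_bounded hf.2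
  have hfz : ∀ w ∈ unitDisk, f w = ∑' n, u n * w ^ n := expand hf.1 hub
  -- the two power series agree on the disk
  have hEq : Set.EqOn (fun w => q.eval w) (fun w => ∑' j, conv A u j * w ^ j) unitDisk := by
    intro w hw
    show q.eval w = ∑' j, conv A u j * w ^ j
    rw [← prod_tsum A hub hw, ← hfz w hw, ← aA_eval ζ w, heq w hw, hpq]
  have hcoeffs : ∀ j, q.coeff j = conv A u j := by
    intro j
    have := coefCongr hEq j
    rwa [coef_poly, (master (conv_bounded A hub)).2 j] at this
  have hvanish : ∀ j, N ≤ j → conv A u j = 0 := by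
    intro j hj
    rw [← hcoeffs j]
    refine q.coeff_eq_zero_of_degree_lt (lt_of_lt_of_le hqdeg ?_)
    exact_mod_cast Nat.cast_le.mpr hj
  -- apply the recurrence lemma
  have huz : ∀ n, u n = 0 := by
    refine rec_lemma (List.ofFn ζ) ?_ u (tendsto_of_l2 hf.2) ?_
    · intro w hw
      rw [List.mem_ofFn] at hw
      obtain ⟨j, rfl⟩ := hw
      exact hζ j
    · intro j hj
      rw [List.map_ofFn, List.prod_ofFn]
      rw [List.length_ofFn] at hj
      exact hvanish j hj
  have hfz0 : f z = 0 := by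
    rw [hfz z hz]
    simp [huz]
  rw [← heq z hz, hfz0, mul_zero]

lemma part_forward (hζ : ∀ j, ‖ζ j‖ = 1) (g : ℂ → ℂ)
    (hg : MemMbar (fun z => ∏ j, (z - ζ j)) g) :
    ∃ f p, MemH2 f ∧ MemPoly N p ∧
      ∀ z ∈ unitDisk, g z = (∏ j, (z - ζ j)) * f z + p z := by
  obtain ⟨f, hf, hEq⟩ := hg
  set A := ∏ j, (X - C (ζ j)) with hA
  set c := ∏ j, -(starRingEnd ℂ) (ζ j) with hc
  set u := coef f with hu
  have hub : ∃ C, ∀ n, ‖u n‖ ≤ C := sq_summable_bounded hf.2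
  set v : ℕ → ℂ := fun n => c * u (n + N) with hv
  have hvb : ∃ C, ∀ n, ‖v n‖ ≤ C := by
    obtain ⟨C, hC⟩ := hub
    exact ⟨‖c‖ * C, fun n => by
      rw [hv, norm_mul]
      exact mul_le_mul_of_nonneg_left (hC _) (norm_nonneg _)⟩
  set h : ℂ → ℂ := fun z => ∑' n, v n * z ^ n with hh
  have hmem : MemH2 h := by
    refine ⟨(master hvb).1, ?_⟩
    have h1 : Summable fun n => ‖u (n + N)‖ ^ 2 :=
      hf.2.comp_injective (add_left_injective N)
    refine (h1.mul_left (‖c‖ ^ 2)).congr fun n => ?_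
    rw [hh, (master hvb).2 n]
    simp only [hv]
    rw [norm_mul, mul_pow]
  set δ : ℕ → ℂ := fun j =>
    if j < N then c * conv A u (j + N) - conv A v j else 0 with hδ
  set q : Polynomial ℂ := ∑ j ∈ Finset.range N, Polynomial.C (δ j) * X ^ j with hq
  have hqdeg : q.degree < (N : WithBot ℕ) := by
    rw [hq]
    refine lt_of_le_of_lt (Polynomial.degree_sum_le _ _) ?_
    rw [Finset.sup_lt_iff (by exact_mod_cast WithBot.bot_lt_coe N)]
    intro j hj
    refine lt_of_le_of_lt (Polynomial.degree_C_mul_X_pow_le _ _) ?_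
    exact_mod_cast Nat.cast_lt.mpr (Finset.mem_range.mp hj)
  have hqcoeff : ∀ j, q.coeff j = δ j := by
    intro j
    rw [hq, Polynomial.finset_sum_coeff]
    by_cases hjN : j < N
    · rw [Finset.sum_eq_single j (fun m _ hm => by
        rw [Polynomial.coeff_C_mul, Polynomial.coeff_X_pow, if_neg (Ne.symm hm), mul_zero])
        (fun hj => absurd (Finset.mem_range.mpr hjN) hj)]
      rw [Polynomial.coeff_C_mul, Polynomial.coeff_X_pow, if_pos rfl, mul_one]
    · rw [Finset.sum_eq_zero fun m hm => by
        rw [Polynomial.coeff_C_mul, Polynomial.coeff_X_pow,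
          if_neg (by simp at hm; omega), mul_zero]]
      rw [hδ]
      simp [hjN]
  have key : ∀ j, c * conv A u (j + N) = conv A v j + δ j := by
    intro j
    by_cases hjN : j < N
    · rw [hδ]
      simp only [if_pos hjN]
      ring
    · rw [hδ]
      simp only [if_neg hjN, add_zero]
      push_neg at hjN
      rw [conv_eq_sum_if' A v j N (le_of_eq (A_natDegree ζ)),
        conv_eq_sum_if' A u (j + N) N (le_of_eq (A_natDegree ζ)), Finset.mul_sum]
      refine Finset.sum_congr rfl fun m hm => ?_
      have hmN : m ≤ N := by simp at hm; omega
      rw [if_pos (by omega : m ≤ j), if_pos (by omega : m ≤ j + N)]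
      simp only [hv]
      rw [show j - m + N = j + N - m by omega]
      ring
  refine ⟨h, fun z => q.eval z, hmem, ⟨q, hqdeg, fun z => rfl⟩, fun z hz => ?_⟩
  have hTz : g z = ∑' n, (c * conv A u (n + N)) * z ^ n := by
    rw [hEq hz, Tbar]
    refine tsum_congr fun n => ?_
    congr 1
    have hW := W ζ hζ hub n
    rw [← hA, ← hc] at hW
    rw [← hW]
    refine tsum_congr fun k => ?_
    rw [coef_a, ← hA]
  rw [hTz, aA_eval ζ z, ← hA]
  show ∑' n, (c * conv A u (n + N)) * z ^ n
      = A.eval z * (∑' n, v n * z ^ n) + q.eval z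
  rw [prod_tsum A hvb hz, poly_tsum q]
  have hsum1 : Summable fun j => conv A v j * z ^ j := summable_pow (conv_bounded A hvb) hz
  have hsum2 : Summable fun j => q.coeff j * z ^ j :=
    summable_pow (poly_coeff_bounded q) hz
  rw [← Summable.tsum_add hsum1 hsum2]
  refine tsum_congr fun j => ?_
  rw [hqcoeff j, key j]
  ring

lemma part_backward (hζ : ∀ j, ‖ζ j‖ = 1) (g : ℂ → ℂ)
    (hg : ∃ f p, MemH2 f ∧ MemPoly N p ∧
      ∀ z ∈ unitDisk, g z = (∏ j, (z - ζ j)) * f z + p z) :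
    MemMbar (fun z => ∏ j, (z - ζ j)) g := by
  obtain ⟨f, p, hf, ⟨q, hqdeg, hpq⟩, hrep⟩ := hg
  set A := ∏ j, (X - C (ζ j)) with hA
  set c := ∏ j, -(starRingEnd ℂ) (ζ j) with hc
  set u := coef f with hu
  have hub : ∃ C, ∀ n, ‖u n‖ ≤ C := sq_summable_bounded hf.2
  set s := (X ^ N * q) /ₘ A with hs
  set r := (X ^ N * q) %ₘ A with hr
  have hAne : A ≠ 0 := (A_monic ζ).ne_zero
  have hAdeg : A.degree = (N : WithBot ℕ) := by
    rw [Polynomial.degree_eq_natDegree hAne, A_natDegree]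
  have hdiv : A * s = X ^ N * q - r := by
    have := Polynomial.modByMonic_add_div (X ^ N * q) A
    rw [hs, hr]
    linear_combination this
  set v : ℕ → ℂ := fun n => (starRingEnd ℂ) c * (s.coeff n + if N ≤ n then u (n - N) else 0)
    with hv
  have hvb : ∃ C, ∀ n, ‖v n‖ ≤ C := by
    obtain ⟨C1, hC1⟩ := poly_coeff_bounded s
    obtain ⟨C2, hC2⟩ := hub
    refine ⟨‖(starRingEnd ℂ) c‖ * (C1 + C2), fun n => ?_⟩
    rw [hv, norm_mul]
    refine mul_le_mul_of_nonneg_left ((norm_add_le _ _).trans ?_) (norm_nonneg _)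
    refine add_le_add (hC1 n) ?_
    split_ifs
    · exact hC2 _
    · simpa using (norm_nonneg (u 0)).trans (hC2 0)
  set h : ℂ → ℂ := fun z => ∑' n, v n * z ^ n with hh
  have hmem : MemH2 h := by
    refine ⟨(master hvb).1, ?_⟩
    have h1 : Summable fun n => ‖s.coeff n + if N ≤ n then u (n - N) else 0‖ ^ 2 := by
      refine l2_add ?_ ?_
      · refine summable_of_ne_finset_zero (s := Finset.range (s.natDegree + 1))
          fun n hn => ?_
        rw [s.coeff_eq_zero_of_natDegree_lt (by simp at hn; omega), norm_zero]
        norm_num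
      · have h2 : ∀ n : ℕ, ‖(fun m => if N ≤ m then u (m - N) else 0) (n + N)‖ ^ 2
            = ‖u n‖ ^ 2 := by
          intro n
          simp only [if_pos (by omega : N ≤ n + N)]
          rw [show n + N - N = n by omega]
        refine (Function.Injective.summable_iff (add_left_injective N) fun m hm => ?_).mp
          ((hf.2.congr fun n => (h2 n).symm))
        rcases lt_or_ge m N with hmN | hmN
        · rw [if_neg (by omega), norm_zero]
          norm_num
        · exact absurd ⟨m - N, by show m - N + N = m; omega⟩ hm
    refine (h1.mul_left (‖(starRingEnd ℂ) c‖ ^ 2)).congr fun n => ?_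
    rw [hh, (master hvb).2 n]
    simp only [hv]
    rw [norm_mul, mul_pow]
  -- (A*s).coeff (n+N) = q.coeff n
  have hAs : ∀ n, (A * s).coeff (n + N) = q.coeff n := by
    intro n
    have hr0 : r.coeff (n + N) = 0 := by
      refine Polynomial.coeff_eq_zero_of_degree_lt ?_
      refine lt_of_lt_of_le (?_ : r.degree < (N : WithBot ℕ)) ?_
      · rw [hr, ← hAdeg]
        exact Polynomial.degree_modByMonic_lt _ (A_monic ζ)
      · exact_mod_cast Nat.cast_le.mpr (Nat.le_add_left N n)
    rw [hdiv, Polynomial.coeff_sub, Polynomial.coeff_X_pow_mul q N n, hr0, sub_zero]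
  -- coeff of product as conv
  have hmul_conv : ∀ (P Q : Polynomial ℂ) (t : ℕ), (P * Q).coeff t = conv P Q.coeff t := by
    intro P Q t
    rw [Polynomial.coeff_mul, conv]
    exact Finset.Nat.sum_antidiagonal_eq_sum_range_succ
      (fun a b => P.coeff a * Q.coeff b) t
  have key : ∀ n, c * conv A v (n + N) = q.coeff n + conv A u n := by
    intro n
    rw [conv_eq_sum_if' A v (n + N) N (le_of_eq (A_natDegree ζ))]
    have step : ∀ m ∈ Finset.range (N + 1),
        A.coeff m * (if m ≤ n + N then v (n + N - m) else 0)
          = (starRingEnd ℂ) c * (A.coeff m * s.coeff (n + N - m)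
              + A.coeff m * (if m ≤ n then u (n - m) else 0)) := by
      intro m hm
      have hmN : m ≤ N := by simp at hm; omega
      rw [if_pos (by omega : m ≤ n + N)]
      simp only [hv]
      have e1 : N ≤ n + N - m ↔ m ≤ n := by omega
      by_cases hmn : m ≤ n
      · rw [if_pos (e1.mpr hmn), if_pos hmn, show n + N - m - N = n - m by omega]
        ring
      · rw [if_neg (fun hcon => hmn (e1.mp hcon)), if_neg hmn]
        ring
    have hcc : c * (starRingEnd ℂ) c = 1 := by
      simp only [hc]
      exact c_mul_conj ζ hζ
    rw [Finset.sum_congr rfl step, ← Finset.mul_sum, ← mul_assoc, hcc,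
      one_mul, Finset.sum_add_distrib]
    congr 1
    · rw [← hAs n, hmul_conv, conv_eq_sum_if' A s.coeff (n + N) N (le_of_eq (A_natDegree ζ))]
      refine Finset.sum_congr rfl fun m hm => ?_
      rw [if_pos (by simp at hm; omega)]
    · rw [conv_eq_sum_if' A u n N (le_of_eq (A_natDegree ζ))]
  refine ⟨h, hmem, fun z hz => ?_⟩
  have hTz : Tbar (fun z => ∏ j, (z - ζ j)) h z
      = ∑' n, (c * conv A v (n + N)) * z ^ n := by
    rw [Tbar]
    refine tsum_congr fun n => ?_
    congr 1
    have hW := W ζ hζ hvb n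
    rw [← hA, ← hc] at hW
    rw [← hW]
    refine tsum_congr fun k => ?_
    rw [coef_a, ← hA, hh, (master hvb).2]
  rw [hTz]
  have hsum1 : Summable fun n => q.coeff n * z ^ n :=
    summable_pow (poly_coeff_bounded q) hz
  have hsum2 : Summable fun n => conv A u n * z ^ n :=
    summable_pow (conv_bounded A hub) hz
  have : ∑' n, (c * conv A v (n + N)) * z ^ n
      = ∑' n, (q.coeff n * z ^ n + conv A u n * z ^ n) := by
    congr 1 with n
    rw [key n]
    ring
  rw [this, Summable.tsum_add hsum1 hsum2, ← poly_tsum q, ← prod_tsum A hub hz, hrep z hz, ← hpq,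
    aA_eval ζ z, ← hA, hu]
  rw [← expand hf.1 hub z hz]
  ring

end Main

/-- for `a(z) = ∏ (z - ζⱼ)` with all `ζⱼ` on the unit circle,
`M(ā) = aH² ∔ P_{N-1}`, and the sum is direct: `aH² ∩ P_{N-1} = {0}`. -/
theorem stmt4 (N : ℕ) (ζ : Fin N → ℂ) (hζ : ∀ j, ‖ζ j‖ = 1) :
    (∀ g, MemMbar (fun z => ∏ j, (z - ζ j)) g ↔
        ∃ f p, MemH2 f ∧ MemPoly N p ∧
          ∀ z ∈ unitDisk, g z = (∏ j, (z - ζ j)) * f z + p z) ∧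
      ∀ f p, MemH2 f → MemPoly N p →
        (∀ z ∈ unitDisk, (∏ j, (z - ζ j)) * f z = p z) →
          ∀ z ∈ unitDisk, p z = 0 := by
  exact ⟨fun g => ⟨part_forward ζ hζ g, part_backward ζ hζ g⟩, part_direct ζ hζ⟩
end
end

section
/- Let a ∈ H^∞ be outer. The adjoint of X_{\bar{a}} = B|_{M(\bar{a})} on M(\bar{a}) is X_{\bar{a}}* = S_{\bar{a}} + 1 ⊗_{\bar{a}} T_{\bar{a}}Ba; that is, for f ∈ M(\bar{a}), X_{\bar{a}}* f = zf + ⟨f, T_{\bar{a}}Ba⟩_{\bar{a}} · 1. -/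
open Complex Set

noncomputable section

lemma hasSum_coef {f : ℂ → ℂ} (hf : DifferentiableOn ℂ f unitDisk) {z : ℂ}
    (hz : z ∈ unitDisk) : HasSum (fun n => coef f n * z ^ n) (f z) := by
  have h := Complex.hasSum_taylorSeries_on_ball (c := 0) (r := 1) hf hz
  convert h using 2 with n
  · rfl
  rw [coef]
  field_simp [smul_eq_mul]
  ring

lemma ofScalars_coeff (c : ℕ → ℂ) (k : ℕ) :
    (FormalMultilinearSeries.ofScalars ℂ c).coeff k = c k := by
  show (FormalMultilinearSeries.ofScalars ℂ c k) (fun _ => (1:ℂ)) = c k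
  rw [FormalMultilinearSeries.ofScalars_apply_eq]
  simp

lemma coef_eq_of_hasSum {f : ℂ → ℂ} {c : ℕ → ℂ}
    (h : ∀ z ∈ unitDisk, HasSum (fun n => c n * z ^ n) (f z)) (n : ℕ) :
    coef f n = c n := by
  have hhalf : (1/2 : ℂ) ∈ unitDisk := by
    simp [unitDisk, Metric.mem_ball]; norm_num
  have hsum : Summable fun n => ‖c n‖ * (1/2 : ℝ) ^ n := by
    have := (h _ hhalf).summable.norm
    simpa [norm_mul, norm_pow] using this
  have hball : HasFPowerSeriesOnBall f (FormalMultilinearSeries.ofScalars ℂ c) 0 (1/2) := by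
    constructor
    · have hr : ((1/2 : NNReal) : ENNReal) ≤ (FormalMultilinearSeries.ofScalars ℂ c).radius := by
        apply FormalMultilinearSeries.le_radius_of_summable_norm
        convert hsum using 2 with n
        rw [FormalMultilinearSeries.ofScalars_norm]
        norm_num
      refine le_trans (le_of_eq ?_) hr
      norm_num
    · norm_num
    · intro y hy
      have hy' : y ∈ unitDisk := by
        have h2 : y ∈ Metric.eball (0:ℂ) ((1:NNReal) : ENNReal) :=
          Metric.eball_subset_eball (by norm_num) hy
        rw [Metric.emetric_ball_nnreal] at h2
        simpa [unitDisk] using h2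
      have hS := h y hy'
      have : ∀ k, (FormalMultilinearSeries.ofScalars ℂ c) k (fun _ => y) = c k * y ^ k := by
        intro k
        rw [FormalMultilinearSeries.ofScalars_apply_eq, smul_eq_mul]
      rw [zero_add]
      exact HasSum.congr_fun hS (fun k => (this k))
  have hfact := hball.factorial_smul (y := (1:ℂ)) n
  rw [FormalMultilinearSeries.ofScalars_apply_eq] at hfact
  simp only [one_pow, smul_eq_mul, mul_one, nsmul_eq_mul, smul_smul] at hfact
  rw [coef, iteratedDeriv_eq_iteratedFDeriv, ← hfact]
  rw [mul_comm, mul_div_assoc, div_self (by exact_mod_cast n.factorial_ne_zero), mul_one]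

lemma coef_zero (f : ℂ → ℂ) : coef f 0 = f 0 := by simp [coef]

lemma coef_one (f : ℂ → ℂ) : coef f 1 = deriv f 0 := by simp [coef, iteratedDeriv_one]

lemma hasSum_coef_shift {f : ℂ → ℂ} (hf : DifferentiableOn ℂ f unitDisk) {z : ℂ}
    (hz : z ∈ unitDisk) (hz0 : z ≠ 0) :
    HasSum (fun n => coef f (n+1) * z ^ (n+1)) (f z - f 0) := by
  have h := hasSum_coef hf hz
  rw [(hasSum_nat_add_iff 1 (f := fun n => coef f n * z ^ n))]
  convert h using 1
  · rfl
  simp [coef_zero]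

lemma coef_Bshift {f : ℂ → ℂ} (hf : DifferentiableOn ℂ f unitDisk) (n : ℕ) :
    coef (Bshift f) n = coef f (n+1) := by
  apply coef_eq_of_hasSum
  intro z hz
  rcases eq_or_ne z 0 with rfl | hz0
  · have : HasSum (fun n => coef f (n+1) * (0:ℂ) ^ n) (coef f 1 * (0:ℂ)^0) := by
      apply hasSum_single 0
      intro b hb
      simp [zero_pow hb]
    simpa [Bshift, coef_one] using this
  · have h := (hasSum_coef_shift hf hz hz0).mul_right z⁻¹
    have heq : (fun n => coef f (n+1) * z ^ (n+1) * z⁻¹) = fun n => coef f (n+1) * z ^ n := by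
      funext n
      rw [pow_succ]
      field_simp
    rw [heq] at h
    have : Bshift f z = (f z - f 0) * z⁻¹ := by
      simp [Bshift, hz0, div_eq_mul_inv]
    rw [this]
    exact h

lemma tsum_shift {f : ℕ → ℂ} (h0 : f 0 = 0) : ∑' n, f n = ∑' n, f (n + 1) := by
  refine (Function.Injective.tsum_eq Nat.succ_injective ?_).symm
  intro x hx
  rcases x with _ | m
  · exact absurd h0 hx
  · exact ⟨m, rfl⟩

lemma coef_mul_id {v : ℂ → ℂ} (hv : DifferentiableOn ℂ v unitDisk) (n : ℕ) :
    coef (fun z => z * v z) n = Nat.casesOn n 0 (coef v) := by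
  apply coef_eq_of_hasSum
  intro z hz
  have h := (hasSum_coef hv hz).mul_left z
  have h2 : HasSum (fun n => (Nat.casesOn (n+1) 0 (coef v) : ℂ) * z ^ (n+1)) (z * v z) := by
    convert h using 2 with n
    · rfl
    simp
    ring
  have := (hasSum_nat_add_iff 1 (f := fun n => (Nat.casesOn n 0 (coef v) : ℂ) * z ^ n)).mp h2
  simpa using this

lemma coef_bound {f : ℂ → ℂ} (hf : DifferentiableOn ℂ f unitDisk) {s : ℝ}
    (h0 : 0 < s) (h1 : s < 1) : ∃ C : ℝ, 0 ≤ C ∧ ∀ n, ‖coef f n‖ * s ^ n ≤ C := by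
  have hz : (s : ℂ) ∈ unitDisk := by
    simp only [unitDisk, Metric.mem_ball, dist_zero_right, Complex.norm_real,
      Real.norm_eq_abs, abs_of_pos h0]
    exact h1
  have hs := ((hasSum_coef hf hz).summable).tendsto_atTop_zero.norm
  have heq : (fun n => ‖coef f n * (s:ℂ) ^ n‖) = fun n => ‖coef f n‖ * s ^ n := by
    funext n
    rw [norm_mul, norm_pow, Complex.norm_real, Real.norm_eq_abs, abs_of_pos h0]
  rw [heq, norm_zero] at hs
  have hbdd : BddAbove (Set.range fun n => ‖coef f n‖ * s ^ n) := hs.bddAbove_range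
  obtain ⟨C, hC⟩ := hbdd
  refine ⟨C, ?_, fun n => hC ⟨n, rfl⟩⟩
  exact le_trans (by positivity) (hC ⟨0, rfl⟩)

lemma integral_exp_int (k : ℤ) :
    (∫ θ in (0:ℝ)..(2*Real.pi), Complex.exp (k * θ * I)) = if k = 0 then (2*Real.pi:ℂ) else 0 := by
  rcases eq_or_ne k 0 with rfl | hk
  · simp
  · rw [if_neg hk]
    have heq : (fun θ : ℝ => Complex.exp (k * θ * I)) = fun θ : ℝ => Complex.exp ((k * I) * θ) := by
      funext θ; ring_nf
    rw [heq, integral_exp_mul_complex (by simp [hk, Complex.I_ne_zero])]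
    push_cast
    have h2 : (k : ℂ) * I * (2*(Real.pi:ℂ)) = k * (2 * (Real.pi:ℂ) * I) := by ring
    have h0 : (k : ℂ) * I * 0 = 0 := by ring
    rw [h2, h0, Complex.exp_int_mul_two_pi_mul_I, Complex.exp_zero, sub_self, zero_div]

lemma cont_exp_term (w : ℂ) : Continuous (fun θ : ℝ => Complex.exp (w * θ * I)) := by
  fun_prop

lemma integral_finsum_exp (c : ℕ → ℂ) (N n : ℕ) (hn : n < N) :
    (∫ θ in (0:ℝ)..(2*Real.pi),
      (∑ m ∈ Finset.range N, c m * Complex.exp (m * θ * I)) * Complex.exp (-(n * θ * I)))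
      = 2*Real.pi * c n := by
  have heq : ∀ θ : ℝ, (∑ m ∈ Finset.range N, c m * Complex.exp (m * θ * I))
      * Complex.exp (-(n * θ * I))
      = ∑ m ∈ Finset.range N, c m * Complex.exp ((((m:ℤ) - (n:ℤ) : ℤ) : ℂ) * θ * I) := by
    intro θ
    rw [Finset.sum_mul]
    refine Finset.sum_congr rfl fun m _ => ?_
    rw [mul_assoc, ← Complex.exp_add]
    push_cast
    ring_nf
  simp only [heq]
  rw [intervalIntegral.integral_finset_sum]
  · have : ∀ m ∈ Finset.range N,
        (∫ θ in (0:ℝ)..(2*Real.pi), c m * Complex.exp ((((m:ℤ) - (n:ℤ) : ℤ) : ℂ) * θ * I))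
        = if m = n then 2*Real.pi * c n else 0 := by
      intro m _
      rw [intervalIntegral.integral_const_mul, integral_exp_int]
      rcases eq_or_ne m n with rfl | hmn
      · simp [mul_comm]
      · rw [if_neg (by omega), mul_zero, if_neg hmn]
    rw [Finset.sum_congr rfl this, Finset.sum_ite_eq' (Finset.range N) n fun _ => 2*Real.pi * c n,
      if_pos (Finset.mem_range.mpr hn)]
  · intro m _
    apply Continuous.intervalIntegrable
    exact continuous_const.mul (cont_exp_term _)

lemma norm_exp_real_mul_I (x : ℝ) : ‖Complex.exp ((x:ℂ) * I)‖ = 1 := by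
  simpa using Complex.abs_exp_ofReal_mul_I x

lemma mem_disk_of_circle {r : ℝ} (h0 : 0 ≤ r) (h1 : r < 1) (θ : ℝ) :
    (r : ℂ) * Complex.exp (θ * I) ∈ unitDisk := by
  simp only [unitDisk, Metric.mem_ball, dist_zero_right, norm_mul]
  rw [Complex.norm_exp]
  simp only [Complex.mul_re, Complex.ofReal_re, Complex.I_re, Complex.ofReal_im, Complex.I_im,
    mul_zero, mul_one, zero_sub, zero_mul]
  rw [Complex.norm_real, Real.norm_eq_abs, _root_.abs_of_nonneg h0]
  simp [Real.exp_zero]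
  exact h1

lemma integral_fun_exp {f : ℂ → ℂ} (hf : DifferentiableOn ℂ f unitDisk) {r : ℝ}
    (h0 : 0 < r) (h1 : r < 1) (n : ℕ) :
    (∫ θ in (0:ℝ)..(2*Real.pi),
      f ((r:ℂ) * Complex.exp (θ * I)) * Complex.exp (-(n * θ * I)))
      = 2*Real.pi * (coef f n * r ^ n) := by
  obtain ⟨s, hs0, hs1, hrs⟩ : ∃ s : ℝ, 0 < s ∧ s < 1 ∧ r < s :=
    ⟨(1+r)/2, by linarith, by linarith, by linarith⟩
  obtain ⟨C, hC0, hC⟩ := coef_bound hf hs0 hs1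
  have hsum : Summable (fun m => ‖coef f m‖ * r ^ m) := by
    have hgeo : Summable (fun m : ℕ => C * (r/s) ^ m) :=
      (summable_geometric_of_lt_one (by positivity)
        (by rw [div_lt_one hs0]; exact hrs)).mul_left C
    refine Summable.of_nonneg_of_le (fun m => by positivity) (fun m => ?_) hgeo
    calc ‖coef f m‖ * r ^ m = (‖coef f m‖ * s ^ m) * ((r/s) ^ m) := by
          rw [div_pow]; field_simp
      _ ≤ C * (r/s) ^ m := mul_le_mul_of_nonneg_right (hC m) (by positivity)
  have key : HasSum
      (fun m => ∫ θ in (0:ℝ)..(2*Real.pi),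
        coef f m * ((r:ℂ) * Complex.exp (θ * I)) ^ m * Complex.exp (-(n * θ * I)))
      (∫ θ in (0:ℝ)..(2*Real.pi),
        f ((r:ℂ) * Complex.exp (θ * I)) * Complex.exp (-(n * θ * I))) := by
    apply intervalIntegral.hasSum_integral_of_dominated_convergence
      (bound := fun m _ => ‖coef f m‖ * r ^ m)
    · intro m
      apply Continuous.aestronglyMeasurable
      fun_prop
    · intro m
      filter_upwards with θ _
      have e1 : ‖Complex.exp ((θ:ℂ) * I)‖ = 1 := norm_exp_real_mul_I θ
      have e2 : ‖Complex.exp (-((n:ℂ) * θ * I))‖ = 1 := by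
        have h3 : -((n:ℂ) * θ * I) = ((-((n:ℝ)*θ):ℝ) : ℂ) * I := by push_cast; ring
        rw [h3]; exact norm_exp_real_mul_I _
      rw [norm_mul, norm_mul, norm_pow, norm_mul, e1, e2, Complex.norm_real, Real.norm_eq_abs,
        _root_.abs_of_nonneg h0.le, mul_one, mul_one]
    · filter_upwards with θ _
      exact hsum
    · apply Continuous.intervalIntegrable continuous_const
    · filter_upwards with θ _
      exact (hasSum_coef hf (mem_disk_of_circle h0.le h1 θ)).mul_right _
  have kevals : ∀ m, (∫ θ in (0:ℝ)..(2*Real.pi),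
        coef f m * ((r:ℂ) * Complex.exp (θ * I)) ^ m * Complex.exp (-(n * θ * I)))
      = if m = n then 2*Real.pi * (coef f n * r ^ n) else 0 := by
    intro m
    have heq : ∀ θ : ℝ, coef f m * ((r:ℂ) * Complex.exp (θ * I)) ^ m
        * Complex.exp (-(n * θ * I))
        = (coef f m * r ^ m) * Complex.exp ((((m:ℤ) - (n:ℤ) : ℤ) : ℂ) * θ * I) := by
      intro θ
      rw [mul_pow, ← Complex.exp_nat_mul, mul_assoc, mul_assoc, ← Complex.exp_add]
      push_cast
      ring_nf
    simp only [heq]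
    rw [intervalIntegral.integral_const_mul, integral_exp_int]
    rcases eq_or_ne m n with rfl | hmn
    · simp; ring
    · rw [if_neg (by omega), mul_zero, if_neg hmn]
  rw [funext kevals] at key
  exact key.unique (hasSum_ite_eq n (2*Real.pi * (coef f n * r ^ n)))

lemma intervalIntegral_conj {f : ℝ → ℂ} {a b : ℝ} :
    (∫ θ in a..b, (starRingEnd ℂ) (f θ)) = (starRingEnd ℂ) (∫ θ in a..b, f θ) := by
  simp only [intervalIntegral, integral_conj, map_sub]

lemma bessel_r {a : ℂ → ℂ} (hd : DifferentiableOn ℂ a unitDisk) {C : ℝ}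
    (hC : ∀ z ∈ unitDisk, ‖a z‖ ≤ C) {r : ℝ} (h0 : 0 < r) (h1 : r < 1) (N : ℕ) :
    ∑ n ∈ Finset.range N, ‖coef a n‖^2 * r^(2*n) ≤ C^2 := by
  classical
  set c : ℕ → ℂ := fun n => coef a n * (r:ℂ)^n with hc
  set g : ℝ → ℂ := fun θ => a ((r:ℂ) * Complex.exp (θ * I)) with hg
  set S : ℝ → ℂ := fun θ => ∑ m ∈ Finset.range N, c m * Complex.exp (m * θ * I) with hS
  set P : ℝ := ∑ n ∈ Finset.range N, ‖c n‖^2 with hP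
  have hgc : Continuous g := by
    apply ContinuousOn.comp_continuous hd.continuousOn (by fun_prop)
    exact fun θ => mem_disk_of_circle h0.le h1 θ
  have hSc : Continuous S := by
    apply continuous_finset_sum
    intro m _
    fun_prop
  have hF1 : ∀ n : ℕ, (∫ θ in (0:ℝ)..(2*Real.pi), g θ * Complex.exp (-(n * θ * I)))
      = 2*Real.pi * c n := fun n => integral_fun_exp hd h0 h1 n
  have hF2 : ∀ n ∈ Finset.range N,
      (∫ θ in (0:ℝ)..(2*Real.pi), S θ * Complex.exp (-(n * θ * I))) = 2*Real.pi * c n :=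
    fun n hn => integral_finsum_exp c N n (Finset.mem_range.mp hn)
  -- conj S as a sum
  have hconjS : ∀ θ : ℝ, (starRingEnd ℂ) (S θ)
      = ∑ n ∈ Finset.range N, (starRingEnd ℂ) (c n) * Complex.exp (-(n * θ * I)) := by
    intro θ
    rw [hS, map_sum]
    refine Finset.sum_congr rfl fun n _ => ?_
    rw [map_mul, ← Complex.exp_conj]
    congr 1
    simp [Complex.conj_I]
  -- generic: ∫ h * conj S for h with known fourier integrals
  have key : ∀ h : ℝ → ℂ, Continuous h →
      (∀ n ∈ Finset.range N,
        (∫ θ in (0:ℝ)..(2*Real.pi), h θ * Complex.exp (-(n * θ * I))) = 2*Real.pi * c n) →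
      (∫ θ in (0:ℝ)..(2*Real.pi), h θ * (starRingEnd ℂ) (S θ)) = 2*Real.pi * (P:ℂ) := by
    intro h hcont hints
    have heq : ∀ θ : ℝ, h θ * (starRingEnd ℂ) (S θ)
        = ∑ n ∈ Finset.range N, (starRingEnd ℂ) (c n) * (h θ * Complex.exp (-(n * θ * I))) := by
      intro θ
      rw [hconjS θ, Finset.mul_sum]
      exact Finset.sum_congr rfl fun n _ => by ring
    simp only [heq]
    rw [intervalIntegral.integral_finset_sum (fun n _ => by
      apply Continuous.intervalIntegrable
      exact continuous_const.mul (hcont.mul (by fun_prop)))]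
    have : ∀ n ∈ Finset.range N,
        (∫ θ in (0:ℝ)..(2*Real.pi), (starRingEnd ℂ) (c n) * (h θ * Complex.exp (-(n * θ * I))))
        = 2*Real.pi * ((‖c n‖^2 : ℝ) : ℂ) := by
      intro n hn
      rw [intervalIntegral.integral_const_mul, hints n hn]
      rw [show (starRingEnd ℂ) (c n) * (2*Real.pi * c n)
        = 2*Real.pi * ((starRingEnd ℂ) (c n) * c n) by ring]
      congr 1
      rw [mul_comm, Complex.mul_conj, Complex.normSq_eq_norm_sq]
    rw [Finset.sum_congr rfl this, ← Finset.mul_sum, hP]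
    push_cast
    ring
  have hgS : (∫ θ in (0:ℝ)..(2*Real.pi), g θ * (starRingEnd ℂ) (S θ)) = 2*Real.pi * (P:ℂ) :=
    key g hgc (fun n _ => hF1 n)
  have hSS : (∫ θ in (0:ℝ)..(2*Real.pi), S θ * (starRingEnd ℂ) (S θ)) = 2*Real.pi * (P:ℂ) :=
    key S hSc hF2
  have hSg : (∫ θ in (0:ℝ)..(2*Real.pi), S θ * (starRingEnd ℂ) (g θ)) = 2*Real.pi * (P:ℂ) := by
    have : ∀ θ : ℝ, S θ * (starRingEnd ℂ) (g θ)
        = (starRingEnd ℂ) (g θ * (starRingEnd ℂ) (S θ)) := by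
      intro θ; rw [map_mul, Complex.conj_conj]; ring
    simp only [this]
    rw [intervalIntegral_conj, hgS, map_mul, map_mul, Complex.conj_ofReal, Complex.conj_ofReal,
      map_ofNat]
  -- expansion of the L² norm of g - S
  have hCnn : 0 ≤ C := le_trans (norm_nonneg _) (hC 0 (by simp [unitDisk]))
  have hpt : ∀ (u : ℝ → ℂ) (θ : ℝ), u θ * (starRingEnd ℂ) (u θ) = ((‖u θ‖^2 : ℝ) : ℂ) := by
    intro u θ
    rw [Complex.mul_conj, Complex.normSq_eq_norm_sq]
  have hint : ∀ u v : ℝ → ℂ, Continuous u → Continuous v →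
      IntervalIntegrable (fun θ => u θ * (starRingEnd ℂ) (v θ)) MeasureTheory.volume 0 (2*Real.pi) :=
    fun u v hu hv => (hu.mul (Complex.continuous_conj.comp hv)).intervalIntegrable _ _
  have hexp : ∀ θ : ℝ, (g θ - S θ) * (starRingEnd ℂ) (g θ - S θ)
      = g θ * (starRingEnd ℂ) (g θ) - g θ * (starRingEnd ℂ) (S θ)
        - S θ * (starRingEnd ℂ) (g θ) + S θ * (starRingEnd ℂ) (S θ) := by
    intro θ
    rw [map_sub]
    ring
  have hgsub : Continuous (fun θ => g θ - S θ) := hgc.sub hSc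
  have hI : (∫ θ in (0:ℝ)..(2*Real.pi), (g θ - S θ) * (starRingEnd ℂ) (g θ - S θ))
      = (∫ θ in (0:ℝ)..(2*Real.pi), g θ * (starRingEnd ℂ) (g θ)) - 2*Real.pi*(P:ℂ) := by
    simp only [hexp]
    rw [intervalIntegral.integral_add (((hint g g hgc hgc).sub (hint g S hgc hSc)).sub
        (hint S g hSc hgc)) (hint S S hSc hSc),
      intervalIntegral.integral_sub ((hint g g hgc hgc).sub (hint g S hgc hSc)) (hint S g hSc hgc),
      intervalIntegral.integral_sub (hint g g hgc hgc) (hint g S hgc hSc),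
      hgS, hSg, hSS]
    ring
  have hcast1 : (∫ θ in (0:ℝ)..(2*Real.pi), (g θ - S θ) * (starRingEnd ℂ) (g θ - S θ))
      = ((∫ θ in (0:ℝ)..(2*Real.pi), ‖g θ - S θ‖^2 : ℝ) : ℂ) := by
    simp only [hpt (fun θ => g θ - S θ)]
    exact intervalIntegral.integral_ofReal
  have hcast2 : (∫ θ in (0:ℝ)..(2*Real.pi), g θ * (starRingEnd ℂ) (g θ))
      = ((∫ θ in (0:ℝ)..(2*Real.pi), ‖g θ‖^2 : ℝ) : ℂ) := by
    simp only [hpt g]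
    exact intervalIntegral.integral_ofReal
  rw [hcast1, hcast2] at hI
  have hreal : (∫ θ in (0:ℝ)..(2*Real.pi), ‖g θ - S θ‖^2)
      = (∫ θ in (0:ℝ)..(2*Real.pi), ‖g θ‖^2) - 2*Real.pi*P := by
    have := hI
    rw [show ((2:ℂ)*Real.pi*(P:ℂ)) = ((2*Real.pi*P : ℝ) : ℂ) by push_cast; ring,
      ← Complex.ofReal_sub] at this
    exact_mod_cast this
  have hnn : 0 ≤ (∫ θ in (0:ℝ)..(2*Real.pi), ‖g θ - S θ‖^2) := by
    apply intervalIntegral.integral_nonneg Real.two_pi_pos.le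
    intro θ _
    positivity
  have hup : (∫ θ in (0:ℝ)..(2*Real.pi), ‖g θ‖^2) ≤ 2*Real.pi*C^2 := by
    have : (∫ θ in (0:ℝ)..(2*Real.pi), ‖g θ‖^2)
        ≤ ∫ _ in (0:ℝ)..(2*Real.pi), C^2 := by
      apply intervalIntegral.integral_mono_on Real.two_pi_pos.le
      · exact ((hgc.norm.pow 2).intervalIntegrable _ _)
      · exact intervalIntegrable_const
      · intro θ _
        have := hC _ (mem_disk_of_circle h0.le h1 θ)
        exact pow_le_pow_left₀ (norm_nonneg _) this 2
    simpa using this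
  have hPC : P ≤ C^2 := by
    nlinarith [Real.two_pi_pos]
  calc ∑ n ∈ Finset.range N, ‖coef a n‖^2 * r^(2*n) = P := by
        rw [hP]
        refine Finset.sum_congr rfl fun n _ => ?_
        rw [hc]
        simp only [norm_mul, norm_pow, Complex.norm_real, Real.norm_eq_abs,
          _root_.abs_of_nonneg h0.le, mul_pow, ← pow_mul]
        ring
    _ ≤ C^2 := hPC

lemma summable_sq_coef {a : ℂ → ℂ} (hd : DifferentiableOn ℂ a unitDisk) {C : ℝ}
    (hC : ∀ z ∈ unitDisk, ‖a z‖ ≤ C) : Summable (fun n => ‖coef a n‖^2) := by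
  apply summable_of_sum_range_le (c := C^2) (fun n => by positivity)
  intro N
  have hne : (nhdsWithin (1:ℝ) (Ioo (0:ℝ) 1)).NeBot := by
    apply mem_closure_iff_nhdsWithin_neBot.mp
    rw [closure_Ioo (by norm_num : (0:ℝ) ≠ 1)]
    exact ⟨zero_le_one, le_refl 1⟩
  have ht : Filter.Tendsto (fun r : ℝ => ∑ n ∈ Finset.range N, ‖coef a n‖^2 * r^(2*n))
      (nhdsWithin 1 (Ioo (0:ℝ) 1)) (nhds (∑ n ∈ Finset.range N, ‖coef a n‖^2)) := by
    have hcont : Filter.Tendsto (fun r : ℝ => ∑ n ∈ Finset.range N, ‖coef a n‖^2 * r^(2*n))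
        (nhds 1) (nhds (∑ n ∈ Finset.range N, ‖coef a n‖^2 * (1:ℝ)^(2*n))) :=
      ((continuous_finset_sum _ fun n _ => continuous_const.mul (continuous_pow _)).tendsto 1)
    simp only [one_pow, mul_one] at hcont
    exact hcont.mono_left nhdsWithin_le_nhds
  refine le_of_tendsto ht ?_
  filter_upwards [self_mem_nhdsWithin] with r hr
  exact bessel_r hd hC hr.1 hr.2 N

lemma tail_tsum_le {f : ℕ → ℝ} (hf : Summable f) (hnn : ∀ k, 0 ≤ f k) (n : ℕ) :
    ∑' k, f (n + k) ≤ ∑' k, f k := by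
  apply Summable.tsum_le_tsum_of_inj (fun k => n + k) (add_right_injective n)
    (fun c _ => hnn c) (fun k => le_refl _) ((summable_nat_add_iff n).mpr hf |>.congr
      (fun k => by rw [add_comm])) hf


/-- for outer `a ∈ H^∞`, the adjoint of `X_{ā} = B|_{M(ā)}` is
`X_{ā}* = S_{ā} + 1 ⊗_{ā} T_{ā}(Ba)`: for `f = T_{ā} v ∈ M(ā)`,
`X_{ā}* f = z f + ⟨f, T_{ā}(Ba)⟩_{ā} · 1`, where
`⟨T_{ā}v, T_{ā}(Ba)⟩_{ā} = ⟨v, Ba⟩_{H²}`; the adjoint relation is expressed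
via preimages: `⟨B u, v⟩_{H²} = ⟨X_{ā}(T_{ā}u), T_{ā}v⟩_{ā} = ⟨u, w⟩_{H²}` where
`T_{ā} w = X_{ā}*(T_{ā} v)`. -/
theorem stmt17 (a : ℂ → ℂ) (ha : MemHinf a) (hao : Outer a)
    (v : ℂ → ℂ) (hv : MemH2 v) :
    ∃ w, MemH2 w ∧
      (∀ z ∈ unitDisk, Tbar a w z = z * Tbar a v z + inner2 v (Bshift a)) ∧
      ∀ u, MemH2 u → inner2 (Bshift u) v = inner2 u w := by
  obtain ⟨hda, C, hCa⟩ := ha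
  obtain ⟨hdv, hsv⟩ := hv
  set w : ℂ → ℂ := fun z => z * v z with hw
  have hwc0 : coef w 0 = 0 := by simpa using coef_mul_id hdv 0
  have hwcS : ∀ n, coef w (n+1) = coef v n := fun n => by simpa using coef_mul_id hdv (n+1)
  have hwd : DifferentiableOn ℂ w unitDisk := differentiableOn_id.mul hdv
  have hwH2 : MemH2 w := by
    refine ⟨hwd, ?_⟩
    rw [← summable_nat_add_iff 1]
    exact hsv.congr fun n => by rw [hwcS n]
  have hsumA : Summable (fun n => ‖coef a n‖^2) := summable_sq_coef hda hCa
  refine ⟨w, hwH2, ?_, ?_⟩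
  · -- Tbar identity
    intro z hz
    have hz1 : ‖z‖ < 1 := by simpa [unitDisk, Metric.mem_ball] using hz
    set cW : ℕ → ℂ := fun n => ∑' k, (starRingEnd ℂ) (coef a k) * coef w (n + k) with hcW
    set cV : ℕ → ℂ := fun n => ∑' k, (starRingEnd ℂ) (coef a k) * coef v (n + k) with hcV
    have hshift : ∀ n, cW (n+1) = cV n := by
      intro n
      exact tsum_congr fun k => by rw [show n+1+k = (n+k)+1 by ring, hwcS]
    have hc0 : cW 0 = inner2 v (Bshift a) := by
      have h1 : cW 0 = ∑' k, (starRingEnd ℂ) (coef a k) * coef w k := by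
        exact tsum_congr fun k => by rw [zero_add]
      rw [h1, tsum_shift (by rw [hwc0, mul_zero])]
      rw [inner2]
      exact tsum_congr fun k => by
        rw [hwcS, coef_Bshift hda, mul_comm]
    set M : ℝ := (∑' k, ‖coef a k‖^2) + ∑' k, ‖coef v k‖^2 with hM
    have hbound : ∀ n, ‖cV n‖ ≤ M := by
      intro n
      have htail : Summable (fun k => ‖coef v (n+k)‖^2) :=
        ((summable_nat_add_iff n).mpr hsv).congr (fun k => by rw [add_comm])
      have hprod : ∀ k, ‖(starRingEnd ℂ) (coef a k) * coef v (n+k)‖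
          ≤ ‖coef a k‖^2 + ‖coef v (n+k)‖^2 := by
        intro k
        rw [norm_mul, RCLike.norm_conj]
        nlinarith [sq_nonneg (‖coef a k‖ - ‖coef v (n+k)‖), norm_nonneg (coef a k),
          norm_nonneg (coef v (n+k))]
      have hmaj : Summable (fun k => ‖coef a k‖^2 + ‖coef v (n+k)‖^2) := hsumA.add htail
      have hnorm : Summable (fun k => ‖(starRingEnd ℂ) (coef a k) * coef v (n+k)‖) :=
        Summable.of_nonneg_of_le (fun k => norm_nonneg _) hprod hmaj
      calc ‖cV n‖ ≤ ∑' k, ‖(starRingEnd ℂ) (coef a k) * coef v (n+k)‖ :=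
            norm_tsum_le_tsum_norm hnorm
        _ ≤ ∑' k, (‖coef a k‖^2 + ‖coef v (n+k)‖^2) := Summable.tsum_le_tsum hprod hnorm hmaj
        _ = (∑' k, ‖coef a k‖^2) + ∑' k, ‖coef v (n+k)‖^2 := Summable.tsum_add hsumA htail
        _ ≤ M := by
            rw [hM]
            have := tail_tsum_le hsv (fun k => by positivity) n
            linarith
    have hsumV : Summable (fun n => cV n * z^n) := by
      apply Summable.of_norm_bounded
        ((summable_geometric_of_lt_one (norm_nonneg z) hz1).mul_left M)
      intro n
      rw [norm_mul, norm_pow]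
      exact mul_le_mul_of_nonneg_right (hbound n) (by positivity)
    have hsumW : Summable (fun n => cW n * z^n) := by
      apply (summable_nat_add_iff 1).mp
      apply ((hsumV.mul_left z).congr (fun n => ?_))
      rw [hshift n, pow_succ]
      ring
    have hTw : Tbar a w z = ∑' n, cW n * z^n := rfl
    have hTv : Tbar a v z = ∑' n, cV n * z^n := rfl
    rw [hTw, hTv, Summable.tsum_eq_zero_add hsumW]
    simp only [pow_zero, mul_one, hc0]
    have : ∀ n : ℕ, cW (n+1) * z^(n+1) = z * (cV n * z^n) := by
      intro n
      rw [hshift n, pow_succ]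
      ring
    rw [tsum_congr this, tsum_mul_left]
    ring
  · -- adjoint identity
    intro u hu
    rw [inner2, inner2]
    rw [tsum_shift (f := fun n => coef u n * (starRingEnd ℂ) (coef w n))
      (by rw [hwc0, map_zero, mul_zero])]
    exact tsum_congr fun n => by rw [coef_Bshift hu.1, hwcS]
end
end
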